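/- Let 0 = a₀ < a₁ < ⋯ < a_m = 1 be a partition of [0,1] with intervals I_j = [a_{j−1}, a_j], and let τ1, τ2 : [0,1] → [0,1] satisfy: τ1(x) ≤ τ2(x) for all x; on each I_j both τ1 and τ2 restrict to C¹ functions that are strictly monotone with the same orientation (both increasing or both decreasing) and satisfy |τ_k′(x)| > 2 (piecewise expanding with slope greater than 2). Let p : [0,1] → [0,1] be Borel measurable and let f be a density with f(x) > 0 for λ_Leb-a.e. x that is invariant under the random map R = {τ1, τ2; p, 1−p}. Then there exists a Borel measurable map 𝝉 : [0,1] → [0,1] such that τ1(x) ≤ 𝝉(x) ≤ τ2(x) for all x ∈ [0,1], 𝝉 is monotone on each partition interval I_j, and the measure f·λ_Leb is invariant under 𝝉, i.e. (f·λ_Leb)(𝝉⁻¹(A)) = (f·λ_Leb)(A) for every Borel set A. In other words, every invariant density of a random map based on the boundary maps is also the invariant density of a selector. -/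

import Mathlib

open MeasureTheory Set Filter
open scoped ENNReal

/-- Lebesgue measure restricted to the unit interval `[0,1]`. -/
noncomputable def leb01 : Measure ℝ := volume.restrict (Set.Icc (0:ℝ) 1)

/-- The measure `f · λ_Leb` with density `f` with respect to Lebesgue measure on `[0,1]`. -/
noncomputable def densMeasure (f : ℝ → ℝ) : Measure ℝ :=
  leb01.withDensity (fun x => ENNReal.ofReal (f x))

/-- `f` is a probability density on `[0,1]`. -/
def IsDensity (f : ℝ → ℝ) : Prop :=
  Measurable f ∧ (∀ x, 0 ≤ f x) ∧ (∫ x in Set.Icc (0:ℝ) 1, f x = 1)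

/-- Invariance of a measure `μ` under the position dependent random map
`R = {τ1, τ2; p, 1-p}`. -/
def RMInvariant (τ1 τ2 p : ℝ → ℝ) (μ : Measure ℝ) : Prop :=
  ∀ A : Set ℝ, MeasurableSet A →
    μ A = ∫⁻ x, (ENNReal.ofReal (p x) * A.indicator (fun _ => (1:ℝ≥0∞)) (τ1 x)
      + ENNReal.ofReal (1 - p x) * A.indicator (fun _ => (1:ℝ≥0∞)) (τ2 x)) ∂μ

section AuxSelector
open scoped Topology


lemma subsingleton_null (ρ : Measure ℝ) (hatom : ∀ x : ℝ, ρ {x} = 0) {s : Set ℝ}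
    (hs : s.Subsingleton) : ρ s = 0 := by
  rcases s.eq_empty_or_nonempty with h | ⟨z, hz⟩
  · simp [h]
  · have hsub : s ⊆ {z} := fun w hw => by simp [hs hw hz]
    exact le_antisymm ((measure_mono hsub).trans (hatom z).le) (zero_le)

lemma null_of_pairs (ρ : Measure ℝ) (hatom : ∀ x : ℝ, ρ {x} = 0) (S : Set ℝ)
    (hp : ∀ z ∈ S, ∀ z' ∈ S, z < z' → ρ (Set.Ioc z z') = 0) : ρ S = 0 := by
  classical
  set Nmin := {z ∈ S | ∀ z' ∈ S, z ≤ z'} with hNmin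
  set Nmax := {z ∈ S | ∀ z' ∈ S, z' ≤ z} with hNmax
  set C : ℚ × ℚ → Set ℝ := fun qq =>
    if (∃ z' ∈ S, z' ≤ (qq.1 : ℝ)) ∧ (∃ z'' ∈ S, (qq.2 : ℝ) ≤ z'') then
      Set.Ioc (qq.1 : ℝ) (qq.2 : ℝ) else ∅ with hC
  have hCnull : ∀ qq, ρ (C qq) = 0 := by
    intro qq
    by_cases h : (∃ z' ∈ S, z' ≤ (qq.1 : ℝ)) ∧ (∃ z'' ∈ S, (qq.2 : ℝ) ≤ z'')
    · obtain ⟨⟨z', hz'S, h1⟩, ⟨z'', hz''S, h2⟩⟩ := h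
      simp only [hC, if_pos (⟨⟨z', hz'S, h1⟩, ⟨z'', hz''S, h2⟩⟩ :
        (∃ z' ∈ S, z' ≤ (qq.1 : ℝ)) ∧ (∃ z'' ∈ S, (qq.2 : ℝ) ≤ z''))]
      rcases lt_or_ge z' z'' with hlt | hle
      · exact le_antisymm ((measure_mono (Set.Ioc_subset_Ioc h1 h2)).trans
          (hp z' hz'S z'' hz''S hlt).le) (zero_le)
      · have : (qq.2 : ℝ) ≤ qq.1 := h2.trans (hle.trans h1)
        rw [Set.Ioc_eq_empty (by exact not_lt.2 this)]; simp
    · simp only [hC, if_neg h]; simp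
  have hcover : S ⊆ Nmin ∪ Nmax ∪ ⋃ qq : ℚ × ℚ, C qq := by
    intro z hz
    by_cases hmin : ∀ z' ∈ S, z ≤ z'
    · exact Or.inl (Or.inl ⟨hz, hmin⟩)
    by_cases hmax : ∀ z' ∈ S, z' ≤ z
    · exact Or.inl (Or.inr ⟨hz, hmax⟩)
    push_neg at hmin hmax
    obtain ⟨z', hz'S, hz'⟩ := hmin
    obtain ⟨z'', hz''S, hz''⟩ := hmax
    obtain ⟨q, hq1, hq2⟩ := exists_rat_btwn hz'
    obtain ⟨q', hq'1, hq'2⟩ := exists_rat_btwn hz''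
    refine Or.inr (Set.mem_iUnion.2 ⟨(q, q'), ?_⟩)
    simp only [hC]
    rw [if_pos ⟨⟨z', hz'S, hq1.le⟩, ⟨z'', hz''S, hq'2.le⟩⟩]
    exact ⟨hq2, hq'1.le⟩
  have h1 : ρ Nmin = 0 := subsingleton_null ρ hatom
    (fun w hw w' hw' => le_antisymm (hw.2 w' hw'.1) (hw'.2 w hw.1))
  have h2 : ρ Nmax = 0 := subsingleton_null ρ hatom
    (fun w hw w' hw' => le_antisymm (hw'.2 w hw.1) (hw.2 w' hw'.1))
  have h3 : ρ (⋃ qq : ℚ × ℚ, C qq) = 0 := by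
    refine le_antisymm ((measure_iUnion_le _).trans ?_) (zero_le)
    simp [hCnull]
  refine le_antisymm ?_ (zero_le)
  calc ρ S ≤ ρ (Nmin ∪ Nmax ∪ ⋃ qq : ℚ × ℚ, C qq) := measure_mono hcover
    _ ≤ ρ (Nmin ∪ Nmax) + ρ (⋃ qq : ℚ × ℚ, C qq) := measure_union_le _ _
    _ ≤ (ρ Nmin + ρ Nmax) + ρ (⋃ qq : ℚ × ℚ, C qq) :=
        add_le_add_left (measure_union_le _ _) _
    _ = 0 := by rw [h1, h2, h3]; simp

lemma flat_null (ρ : Measure ℝ) [IsFiniteMeasure ρ] (hatom : ∀ x : ℝ, ρ {x} = 0)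
    (g : ℝ≥0∞) : ρ {x | ρ (Set.Iic x) = g} = 0 := by
  refine null_of_pairs ρ hatom _ ?_
  intro z hz z' hz' hlt
  have hu : Set.Iic z ∪ Set.Ioc z z' = Set.Iic z' := Set.Iic_union_Ioc_eq_Iic hlt.le
  have hd : Disjoint (Set.Iic z) (Set.Ioc z z') := by
    exact Set.Iic_disjoint_Ioc le_rfl
  have := measure_union (μ := ρ) hd measurableSet_Ioc
  rw [hu] at this
  have hz1 : ρ (Set.Iic z) = g := hz
  have hz2 : ρ (Set.Iic z') = g := hz'
  rw [hz1, hz2] at this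
  have hfin : g ≠ ∞ := by
    rw [← hz1]; exact (measure_lt_top ρ _).ne
  exact (ENNReal.add_right_inj hfin).1 (by rw [← this]; ring) |>.symm

lemma Iic_right_cont (κ : Measure ℝ) [IsFiniteMeasure κ] (x : ℝ) :
    Tendsto (fun n : ℕ => κ (Set.Iic (x + 1 / (n + 1)))) atTop (𝓝 (κ (Set.Iic x))) := by
  have hinter : ⋂ n : ℕ, Set.Iic (x + 1 / (n + 1 : ℝ)) = Set.Iic x := by
    ext z
    simp only [Set.mem_iInter, Set.mem_Iic]
    constructor
    · intro h
      refine le_of_forall_pos_le_add fun ε hε => ?_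
      obtain ⟨n, hn⟩ := exists_nat_one_div_lt hε
      exact (h n).trans (by linarith [hn])
    · intro h n
      have : (0:ℝ) < 1 / (n + 1) := by positivity
      linarith
  have := MeasureTheory.tendsto_measure_iInter_atTop
    (s := fun n : ℕ => Set.Iic (x + 1 / (n + 1 : ℝ)))
    (fun n => measurableSet_Iic.nullMeasurableSet)
    (fun n m hnm => Set.Iic_subset_Iic.2 (by
      have h1 : (1:ℝ) / (m + 1) ≤ 1 / (n + 1) := by
        apply one_div_le_one_div_of_le (by positivity)
        exact_mod_cast add_le_add_left (Nat.cast_le.2 hnm) 1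
      linarith))
    ⟨0, (measure_lt_top κ _).ne⟩
  rwa [hinter] at this

lemma one_div_succ_tendsto : Tendsto (fun n : ℕ => (1 : ℝ) / (n + 1)) atTop (𝓝 0) :=
  tendsto_one_div_add_atTop_nhds_zero_nat

lemma clampTo_mem {l r : ℝ} (h : l ≤ r) (x : ℝ) : max l (min r x) ∈ Set.Icc l r :=
  ⟨le_max_left _ _, max_le h (min_le_left _ _)⟩

lemma clampTo_eq {l r x : ℝ} (hx : x ∈ Set.Icc l r) : max l (min r x) = x := by
  rw [min_eq_right hx.2, max_eq_right hx.1]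

lemma clampTo_mono {l r : ℝ} : Monotone (fun x => max l (min r x)) :=
  fun x y h => max_le_max le_rfl (min_le_min le_rfl h)

theorem incBlock (ρ ν : Measure ℝ) [IsFiniteMeasure ρ] [IsFiniteMeasure ν]
    (l r : ℝ) (hlr : l ≤ r)
    (hρsupp : ρ (Set.Icc l r)ᶜ = 0) (hρatom : ∀ x : ℝ, ρ {x} = 0)
    (g1 g2 : ℝ → ℝ)
    (hg12 : ∀ x ∈ Set.Icc l r, g1 x ≤ g2 x)
    (hg1m : MonotoneOn g1 (Set.Icc l r)) (hg2m : MonotoneOn g2 (Set.Icc l r))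
    (hmass : ν Set.univ = ρ Set.univ)
    (hbot : ν (Set.Iio (g1 l)) = 0)
    (hup : ∀ x ∈ Set.Icc l r, ρ (Set.Iic x) ≤ ν (Set.Iic (g2 x)))
    (hlow : ∀ x ∈ Set.Icc l r, ∀ s < g1 x, ν (Set.Iic s) ≤ ρ (Set.Iio x)) :
    ∃ T : ℝ → ℝ, Monotone T ∧ (∀ x ∈ Set.Icc l r, g1 x ≤ T x ∧ T x ≤ g2 x) ∧
      ∀ A : Set ℝ, MeasurableSet A → ρ (T ⁻¹' A) = ν A := by
  classical
  set F : ℝ → ℝ≥0∞ := fun x => ρ (Set.Iic x) with hF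
  set G : ℝ → ℝ≥0∞ := fun t => ν (Set.Iic t) with hG
  have hFmono : Monotone F := fun x y h => measure_mono (Set.Iic_subset_Iic.2 h)
  have hGmono : Monotone G := fun x y h => measure_mono (Set.Iic_subset_Iic.2 h)
  set c : ℝ → ℝ := fun x => max l (min r x) with hc
  have hcmem : ∀ x, c x ∈ Set.Icc l r := fun x => clampTo_mem hlr x
  set g2c : ℝ → ℝ := fun x => g2 (c x) with hg2c
  have hg2cmono : Monotone g2c :=
    fun x y h => hg2m (hcmem x) (hcmem y) (clampTo_mono h)
  have hg2ceq : ∀ x ∈ Set.Icc l r, g2c x = g2 x := fun x hx => by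
    simp only [hg2c, hc, clampTo_eq hx]
  set feas : ℝ → Set ℝ := fun x => {s | s ≤ g2c x ∧ G s ≤ F x} with hfeas
  have hGbot : ∀ s : ℝ, s < g1 l → G s = 0 := fun s hs =>
    le_antisymm ((measure_mono (Set.Iic_subset_Iio.2 hs)).trans hbot.le) (zero_le)
  have hne : ∀ x, (feas x).Nonempty := by
    intro x
    refine ⟨g1 l - 1, ?_, ?_⟩
    · have h1 : g1 l ≤ g1 (c x) := hg1m ⟨le_rfl, hlr⟩ (hcmem x) (hcmem x).1
      have h2 : g1 (c x) ≤ g2 (c x) := hg12 _ (hcmem x)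
      simp only [hg2c]; linarith
    · rw [hGbot _ (by linarith)]; exact zero_le
  have hbdd : ∀ x, BddAbove (feas x) := fun x => ⟨g2c x, fun s hs => hs.1⟩
  set T : ℝ → ℝ := fun x => sSup (feas x) with hT
  have hfeasmono : ∀ {x y : ℝ}, x ≤ y → feas x ⊆ feas y := by
    intro x y h s hs
    exact ⟨hs.1.trans (hg2cmono h), hs.2.trans (hFmono h)⟩
  have hTmono : Monotone T := fun x y h => csSup_le_csSup (hbdd y) (hne x) (hfeasmono h)
  have hTub : ∀ x ∈ Set.Icc l r, T x ≤ g2 x := by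
    intro x hx
    have := csSup_le (hne x) (fun s hs => hs.1)
    rwa [hg2ceq x hx] at this
  have hTlb : ∀ x ∈ Set.Icc l r, g1 x ≤ T x := by
    intro x hx
    have hmem : ∀ s, s < g1 x → s ∈ feas x := by
      intro s hs
      refine ⟨?_, (hlow x hx s hs).trans (measure_mono Set.Iio_subset_Iic_self)⟩
      rw [hg2ceq x hx]
      exact hs.le.trans (hg12 x hx)
    by_contra hlt
    push_neg at hlt
    obtain ⟨s, h1, h2⟩ := exists_between hlt
    exact absurd (le_csSup (hbdd x) (hmem s h2)) (not_le.2 h1)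
  -- key distribution identity
  have hkey : ∀ t : ℝ, ρ {x | T x ≤ t} = G t := by
    intro t
    set g := G t with hg
    have hgle : g ≤ ρ Set.univ := hmass ▸ measure_mono (Set.subset_univ _)
    set X : Set ℝ := {x | x ∈ Set.Icc l r ∧ F x ≤ g} with hX
    have hFl : F l = 0 := by
      have hsub : Set.Iic l ⊆ {l} ∪ (Set.Icc l r)ᶜ := by
        intro z hz
        rcases eq_or_lt_of_le (Set.mem_Iic.1 hz) with h | h
        · exact Or.inl h
        · exact Or.inr (fun hmem => absurd hmem.1 (not_le.2 h))
      refine le_antisymm (((measure_mono hsub).trans (measure_union_le _ _)).trans ?_)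
        (zero_le)
      rw [hρatom l, hρsupp]; simp
    have hlX : l ∈ X := ⟨⟨le_rfl, hlr⟩, by rw [hFl]; exact zero_le⟩
    have hXne : X.Nonempty := ⟨l, hlX⟩
    have hXbdd : BddAbove X := ⟨r, fun x hx => hx.1.2⟩
    set x' := sSup X with hx'
    have hx'mem : x' ∈ Set.Icc l r :=
      ⟨le_csSup hXbdd hlX, csSup_le hXne (fun x hx => hx.1.2)⟩
    -- (a) F x' ≤ g
    have ha : F x' ≤ g := by
      obtain ⟨u, humono, hulim, humem⟩ := exists_seq_tendsto_sSup hXne hXbdd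
      have hcover : Set.Iio x' ⊆ ⋃ n, Set.Iic (u n) := by
        intro z hz
        have : ∀ᶠ n in atTop, z < u n := hulim.eventually_const_lt hz
        obtain ⟨n, hn⟩ := this.exists
        exact Set.mem_iUnion.2 ⟨n, hn.le⟩
      have hdir : Directed (· ⊆ ·) (fun n => Set.Iic (u n)) :=
        (Monotone.directed_le (fun n m h => Set.Iic_subset_Iic.2 (humono h)))
      have hmeas : ρ (⋃ n, Set.Iic (u n)) = ⨆ n, ρ (Set.Iic (u n)) :=
        Directed.measure_iUnion hdir
      have hIio : ρ (Set.Iio x') ≤ g := by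
        refine (measure_mono hcover).trans ?_
        rw [hmeas]
        exact iSup_le (fun n => (humem n).2)
      have hsplit : F x' ≤ ρ (Set.Iio x') + ρ {x'} := by
        refine (measure_mono ?_).trans (measure_union_le _ _)
        intro z hz
        rcases lt_or_eq_of_le (Set.mem_Iic.1 hz) with h | h
        · exact Or.inl h
        · exact Or.inr h
      rw [hρatom x', add_zero] at hsplit
      exact hsplit.trans hIio
    -- (b) g ≤ F x'
    have hb : g ≤ F x' := by
      by_contra hlt
      push_neg at hlt
      rcases eq_or_lt_of_le hx'mem.2 with heq | hltr
      · have hIoi : ρ (Set.Ioi r) = 0 := by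
          refine le_antisymm ((measure_mono ?_).trans hρsupp.le) (zero_le)
          intro z hz hmem
          exact absurd hmem.2 (not_le.2 hz)
        have : ρ (Set.Iic r) + ρ (Set.Ioi r) = ρ Set.univ := by
          rw [← measure_union (Set.Iic_disjoint_Ioi le_rfl) measurableSet_Ioi]
          simp
        rw [hIoi, add_zero] at this
        rw [heq] at hlt
        exact absurd (hgle.trans this.ge) (not_le.2 hlt)
      · have htend := Iic_right_cont ρ x'
        have h1 : ∀ᶠ n : ℕ in atTop, ρ (Set.Iic (x' + 1 / (n + 1))) < g :=
          htend.eventually_lt_const hlt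
        have h2 : ∀ᶠ n : ℕ in atTop, x' + 1 / (n + 1 : ℝ) ≤ r := by
          have := one_div_succ_tendsto.eventually_lt_const (by linarith : (0:ℝ) < r - x')
          filter_upwards [this] with n hn
          linarith
        obtain ⟨n, hn1, hn2⟩ := (h1.and h2).exists
        have hposn : (0:ℝ) < 1 / (n + 1) := by positivity
        have hmemX : x' + 1 / (n + 1 : ℝ) ∈ X :=
          ⟨⟨by linarith [hx'mem.1], hn2⟩, hn1.le⟩
        have := le_csSup hXbdd hmemX
        simp only [← hx'] at this
        linarith
    have hFx' : F x' = g := le_antisymm ha hb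
    -- ρ {F ≤ g} = g
    have hW : ρ {x | F x ≤ g} = g := by
      have hsub1 : Set.Iic x' ⊆ {x | F x ≤ g} :=
        fun z hz => le_of_le_of_eq (hFmono hz) hFx'
      have hsub2 : {x | F x ≤ g} ⊆ Set.Iic x' ∪ (Set.Icc l r)ᶜ := by
        intro z hz
        by_cases hzin : z ∈ Set.Icc l r
        · exact Or.inl (le_csSup hXbdd ⟨hzin, hz⟩)
        · exact Or.inr hzin
      refine le_antisymm ?_ ?_
      · refine ((measure_mono hsub2).trans (measure_union_le _ _)).trans ?_
        rw [hρsupp, add_zero]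
        exact hFx'.le
      · exact hFx'.symm.trans_le (measure_mono hsub1)
    -- discrepancy control
    have hD : ρ {x | F x = g} = 0 := flat_null ρ hρatom g
    have hN : ρ ({x | F x = g} ∪ (Set.Icc l r)ᶜ) = 0 := by
      refine le_antisymm ((measure_union_le _ _).trans ?_) (zero_le)
      rw [hD, hρsupp]; simp
    have hsame : {x | T x ≤ t} \ ({x | F x = g} ∪ (Set.Icc l r)ᶜ)
        = {x | F x ≤ g} \ ({x | F x = g} ∪ (Set.Icc l r)ᶜ) := by
      ext z
      simp only [Set.mem_diff, Set.mem_setOf_eq, Set.mem_union, Set.mem_compl_iff,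
        not_or, not_not]
      constructor
      · rintro ⟨hTz, hFz, hzin⟩
        refine ⟨?_, hFz, hzin⟩
        by_contra hFg
        push_neg at hFg
        -- F z > g, z ∈ Icc l r: show T z > t, contradiction
        have hgz : t < g2 z := by
          by_contra hle'
          push_neg at hle'
          exact absurd ((hup z hzin).trans (hGmono hle')) (not_le.2 hFg)
        have htendG : Tendsto (fun n : ℕ => G (t + 1 / (n + 1))) atTop (𝓝 g) :=
          Iic_right_cont ν t
        have h1 : ∀ᶠ n : ℕ in atTop, G (t + 1 / (n + 1)) < F z :=
          htendG.eventually_lt_const hFg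
        have h2 : ∀ᶠ n : ℕ in atTop, t + 1 / (n + 1 : ℝ) ≤ g2 z := by
          have := one_div_succ_tendsto.eventually_lt_const (by linarith : (0:ℝ) < g2 z - t)
          filter_upwards [this] with n hn
          linarith
        obtain ⟨n, hn1, hn2⟩ := (h1.and h2).exists
        have : t + 1 / (n + 1 : ℝ) ∈ feas z := by
          refine ⟨?_, hn1.le⟩
          rw [hg2ceq z hzin]
          exact hn2
        have := le_csSup (hbdd z) this
        have hposn : (0:ℝ) < 1 / (n + 1) := by positivity
        change _ ≤ T z at this
        linarith
      · rintro ⟨hFz, hFz', hzin⟩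
        refine ⟨?_, hFz', hzin⟩
        by_contra hTz
        push_neg at hTz
        obtain ⟨s, hs, hts⟩ := exists_lt_of_lt_csSup (hne z) hTz
        have h1 : G s ≤ F z := hs.2
        have h2 : g ≤ G s := hGmono hts.le
        exact hFz' (le_antisymm hFz (h2.trans h1))
    calc ρ {x | T x ≤ t}
        = ρ ({x | T x ≤ t} \ ({x | F x = g} ∪ (Set.Icc l r)ᶜ)) :=
          (measure_diff_null hN).symm
      _ = ρ ({x | F x ≤ g} \ ({x | F x = g} ∪ (Set.Icc l r)ᶜ)) := by rw [hsame]
      _ = ρ {x | F x ≤ g} := measure_diff_null hN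
      _ = g := hW
  -- conclude
  have hTmeas : Measurable T := hTmono.measurable
  haveI : IsFiniteMeasure (ρ.map T) := by
    constructor
    rw [Measure.map_apply hTmeas MeasurableSet.univ]
    simpa using measure_lt_top ρ _
  have hmapeq : ρ.map T = ν := by
    refine Measure.ext_of_Iic (ρ.map T) ν (fun a => ?_)
    rw [Measure.map_apply hTmeas measurableSet_Iic]
    exact hkey a
  refine ⟨T, hTmono, fun x hx => ⟨hTlb x hx, hTub x hx⟩, fun A hA => ?_⟩
  rw [← hmapeq, Measure.map_apply hTmeas hA]

theorem decBlock (ρ ν : Measure ℝ) [IsFiniteMeasure ρ] [IsFiniteMeasure ν]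
    (l r : ℝ) (hlr : l ≤ r)
    (hρsupp : ρ (Set.Icc l r)ᶜ = 0) (hρatom : ∀ x : ℝ, ρ {x} = 0)
    (g1 g2 : ℝ → ℝ)
    (hg12 : ∀ x ∈ Set.Icc l r, g1 x ≤ g2 x)
    (hg1a : AntitoneOn g1 (Set.Icc l r)) (hg2a : AntitoneOn g2 (Set.Icc l r))
    (hmass : ν Set.univ = ρ Set.univ)
    (hbot : ν (Set.Iio (g1 r)) = 0)
    (hup : ∀ x ∈ Set.Icc l r, ρ (Set.Ici x) ≤ ν (Set.Iic (g2 x)))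
    (hlow : ∀ x ∈ Set.Icc l r, ∀ s < g1 x, ν (Set.Iic s) ≤ ρ (Set.Ioi x)) :
    ∃ T : ℝ → ℝ, Antitone T ∧ (∀ x ∈ Set.Icc l r, g1 x ≤ T x ∧ T x ≤ g2 x) ∧
      ∀ A : Set ℝ, MeasurableSet A → ρ (T ⁻¹' A) = ν A := by
  set ρ' := ρ.map (fun x : ℝ => -x) with hρ'
  haveI : IsFiniteMeasure ρ' := by
    constructor
    rw [Measure.map_apply measurable_neg MeasurableSet.univ]
    simpa using measure_lt_top ρ _
  have hmapp : ∀ {B : Set ℝ}, MeasurableSet B → ρ' B = ρ ((fun x : ℝ => -x) ⁻¹' B) :=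
    fun hB => Measure.map_apply measurable_neg hB
  have hpreIcc : (fun x : ℝ => -x) ⁻¹' (Set.Icc (-r) (-l))ᶜ = (Set.Icc l r)ᶜ := by
    ext x
    simp only [Set.mem_preimage, Set.mem_compl_iff, Set.mem_Icc]
    constructor
    · intro h hmem; exact h ⟨by linarith [hmem.2], by linarith [hmem.1]⟩
    · intro h hmem; exact h ⟨by linarith [hmem.2], by linarith [hmem.1]⟩
  obtain ⟨T', hT'mono, hT'b, hT'inv⟩ :=
    incBlock ρ' ν (-r) (-l) (by linarith)
      (by rw [hmapp (measurableSet_Icc.compl), hpreIcc]; exact hρsupp)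
      (by
        intro y
        rw [hmapp (measurableSet_singleton y)]
        have : (fun x : ℝ => -x) ⁻¹' {y} = {-y} := by
          ext x; simp [eq_comm, neg_eq_iff_eq_neg]
        rw [this]; exact hρatom (-y))
      (fun y => g1 (-y)) (fun y => g2 (-y))
      (by
        intro y hy
        exact hg12 (-y) ⟨by linarith [hy.2], by linarith [hy.1]⟩)
      (by
        intro y hy y' hy' hle
        exact hg1a ⟨by linarith [hy'.2], by linarith [hy'.1]⟩
          ⟨by linarith [hy.2], by linarith [hy.1]⟩ (by linarith))
      (by
        intro y hy y' hy' hle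
        exact hg2a ⟨by linarith [hy'.2], by linarith [hy'.1]⟩
          ⟨by linarith [hy.2], by linarith [hy.1]⟩ (by linarith))
      (by rw [hmapp MeasurableSet.univ]; simpa using hmass)
      (by simpa using hbot)
      (by
        intro y hy
        have hpre : (fun x : ℝ => -x) ⁻¹' (Set.Iic y) = Set.Ici (-y) := by
          ext x; simp only [Set.mem_preimage, Set.mem_Iic, Set.mem_Ici]; constructor <;>
            (intro h; linarith)
        rw [hmapp measurableSet_Iic, hpre]
        exact hup (-y) ⟨by linarith [hy.2], by linarith [hy.1]⟩)
      (by
        intro y hy s hs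
        have hpre : (fun x : ℝ => -x) ⁻¹' (Set.Iio y) = Set.Ioi (-y) := by
          ext x; simp only [Set.mem_preimage, Set.mem_Iio, Set.mem_Ioi]; constructor <;>
            (intro h; linarith)
        rw [hmapp measurableSet_Iio, hpre]
        exact hlow (-y) ⟨by linarith [hy.2], by linarith [hy.1]⟩ s hs)
  refine ⟨fun x => T' (-x), fun x y hxy => hT'mono (by linarith), ?_, ?_⟩
  · intro x hx
    have := hT'b (-x) ⟨by linarith [hx.2], by linarith [hx.1]⟩
    simpa using this
  · intro A hA
    have h1 := hT'inv A hA
    rw [hmapp (hT'mono.measurable hA)] at h1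
    exact h1

section Runs

def runStart (o : ℕ → Bool) : ℕ → ℕ
  | 0 => 0
  | j+1 => if o (j+1) = o j then runStart o j else j+1

variable (o : ℕ → Bool)

lemma runStart_le (j : ℕ) : runStart o j ≤ j := by
  induction j with
  | zero => simp [runStart]
  | succ n ih =>
    by_cases h : o (n+1) = o n
    · simp only [runStart, if_pos h]; omega
    · simp only [runStart, if_neg h]
      exact le_rfl

lemma runStart_o {i j : ℕ} (h1 : runStart o j ≤ i) (h2 : i ≤ j) : o i = o j := by
  induction j with
  | zero => have : i = 0 := by omega
            rw [this]
  | succ n ih =>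
    by_cases h : o (n+1) = o n
    · simp only [runStart, if_pos h] at h1
      rcases Nat.lt_or_ge i (n+1) with hlt | hge
      · rw [ih h1 (by omega), h]
      · have : i = n + 1 := by omega
        rw [this]
    · simp only [runStart, if_neg h] at h1
      have : i = n + 1 := by omega
      rw [this]

lemma runStart_idem {i j : ℕ} (h1 : runStart o j ≤ i) (h2 : i ≤ j) :
    runStart o i = runStart o j := by
  induction j with
  | zero => have : i = 0 := by omega
            rw [this]
  | succ n ih =>
    by_cases h : o (n+1) = o n
    · simp only [runStart, if_pos h] at h1 ⊢
      rcases Nat.lt_or_ge i (n+1) with hlt | hge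
      · exact ih h1 (by omega)
      · have : i = n + 1 := by omega
        subst this
        simp only [runStart, if_pos h]
    · simp only [runStart, if_neg h] at h1
      have : i = n + 1 := by omega
      subst this
      rfl

lemma runStart_boundary {j : ℕ} (h : 1 ≤ runStart o j) :
    o (runStart o j) ≠ o (runStart o j - 1) := by
  induction j with
  | zero => simp [runStart] at h
  | succ n ih =>
    by_cases hh : o (n+1) = o n
    · simp only [runStart, if_pos hh] at h ⊢
      exact ih h
    · simp only [runStart, if_neg hh] at h ⊢
      simpa using hh

noncomputable def runNext (m j : ℕ) : ℕ :=
  Nat.find (⟨m + j + 1, by omega, Or.inl (by omega)⟩ :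
    ∃ k, j < k ∧ (m ≤ k ∨ runStart o k = k))

lemma lt_runNext (m j : ℕ) : j < runNext o m j :=
  (Nat.find_spec (⟨m + j + 1, by omega, Or.inl (by omega)⟩ :
    ∃ k, j < k ∧ (m ≤ k ∨ runStart o k = k))).1

lemma runNext_bd (m j : ℕ) : m ≤ runNext o m j ∨ runStart o (runNext o m j) = runNext o m j :=
  (Nat.find_spec (⟨m + j + 1, by omega, Or.inl (by omega)⟩ :
    ∃ k, j < k ∧ (m ≤ k ∨ runStart o k = k))).2

lemma runNext_le {m j : ℕ} (h : j < m) : runNext o m j ≤ m :=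
  Nat.find_min' _ ⟨h, Or.inl le_rfl⟩

lemma runNext_min {m j k : ℕ} (h1 : j < k) (h2 : k < runNext o m j) :
    ¬(m ≤ k ∨ runStart o k = k) := by
  have := Nat.find_min (⟨m + j + 1, by omega, Or.inl (by omega)⟩ :
    ∃ k, j < k ∧ (m ≤ k ∨ runStart o k = k)) h2
  intro hc
  exact this ⟨h1, hc⟩

lemma runNext_le_of_bd {m j k : ℕ} (h1 : j < k) (h2 : m ≤ k ∨ runStart o k = k) :
    runNext o m j ≤ k :=
  Nat.find_min' _ ⟨h1, h2⟩

lemma runStart_eq_of_mem {m j i : ℕ} (h1 : j ≤ i) (h2 : i < runNext o m j) :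
    runStart o i = runStart o j := by
  induction i with
  | zero => have : j = 0 := by omega
            rw [this]
  | succ n ih =>
    rcases Nat.lt_or_ge j (n+1) with hlt | hge
    · have hns : ¬(m ≤ n+1 ∨ runStart o (n+1) = n+1) := runNext_min o hlt h2
      push_neg at hns
      by_cases h : o (n+1) = o n
      · simp only [runStart, if_pos h]
        exact ih (by omega) (by omega)
      · simp only [runStart, if_neg h] at hns ⊢
        omega
    · have : j = n + 1 := by omega
      rw [this]

lemma runo_eq_of_mem {m j i : ℕ} (h1 : j ≤ i) (h2 : i < runNext o m j) : o i = o j := by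
  have hs := runStart_eq_of_mem o h1 h2
  have h3 : runStart o i ≤ j := hs ▸ runStart_le o j
  exact (runStart_o o h3 h1).symm

lemma runNext_eq_of_mem {m j i : ℕ} (h1 : j ≤ i) (h2 : i < runNext o m j) :
    runNext o m i = runNext o m j := by
  refine le_antisymm (Nat.find_min' _ ⟨h2, runNext_bd o m j⟩)
    (Nat.find_min' _ ⟨lt_of_le_of_lt h1 (lt_runNext o m i), runNext_bd o m i⟩)

lemma runNext_runStart {m j : ℕ} (hj : j < m) :
    runNext o m (runStart o j) = runNext o m j := by
  refine le_antisymm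
    (Nat.find_min' _ ⟨lt_of_le_of_lt (runStart_le o j) (lt_runNext o m j), runNext_bd o m j⟩) ?_
  refine Nat.find_min' _ ⟨?_, runNext_bd o m (runStart o j)⟩
  by_contra hc
  push_neg at hc
  have hk1 : runStart o j < runNext o m (runStart o j) := lt_runNext o m _
  rcases runNext_bd o m (runStart o j) with h | h
  · omega
  · have h2 : runStart o (runNext o m (runStart o j)) = runStart o j :=
      runStart_idem o (by omega) hc
    omega

lemma runNext_boundary {m j : ℕ} (hj : j < m) (h : runNext o m j < m) :
    o (runNext o m j) ≠ o j := by
  rcases runNext_bd o m j with hh | hh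
  · omega
  · have hk1 : j < runNext o m j := lt_runNext o m j
    have hb : o (runNext o m j) ≠ o (runNext o m j - 1) := by
      have := runStart_boundary o (j := runNext o m j) (by omega)
      rwa [hh] at this
    have h2 : o (runNext o m j - 1) = o j := runo_eq_of_mem o (m := m) (by omega) (by omega)
    rw [h2] at hb
    exact hb

end Runs

lemma monotoneOn_glue (f : ℝ → ℝ) (a : ℕ → ℝ) (s : ℕ) :
    ∀ e, s ≤ e →
    (∀ i, s ≤ i → i < e → MonotoneOn f (Set.Icc (a i) (a (i+1)))) →
    (∀ i j, s ≤ i → i ≤ j → j ≤ e → a i ≤ a j) →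
    MonotoneOn f (Set.Icc (a s) (a e)) := by
  intro e
  induction e with
  | zero =>
    intro hse _ _
    have : s = 0 := by omega
    subst this
    intro x hx y hy hxy
    have hx' : x = a 0 := le_antisymm hx.2 hx.1
    have hy' : y = a 0 := le_antisymm hy.2 hy.1
    rw [hx', hy']
  | succ n ih =>
    intro hse hmono ha
    rcases Nat.lt_or_ge s (n+1) with hlt | hge
    · have h1 : MonotoneOn f (Set.Icc (a s) (a n)) :=
        ih (by omega) (fun i h1 h2 => hmono i h1 (by omega))
          (fun i j hi hij hj => ha i j hi hij (by omega))
      have h2 : MonotoneOn f (Set.Icc (a n) (a (n+1))) := hmono n (by omega) (by omega)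
      have hsn : a s ≤ a n := ha s n le_rfl (by omega) (by omega)
      have hnn : a n ≤ a (n+1) := ha n (n+1) (by omega) (by omega) le_rfl
      intro x hx y hy hxy
      rcases le_total y (a n) with hy1 | hy1
      · exact h1 ⟨hx.1, hxy.trans hy1⟩ ⟨hy.1, hy1⟩ hxy
      · rcases le_total x (a n) with hx1 | hx1
        · calc f x ≤ f (a n) := h1 ⟨hx.1, hx1⟩ ⟨hsn, le_rfl⟩ hx1
            _ ≤ f y := h2 ⟨le_rfl, hnn⟩ ⟨hy1, hy.2⟩ hy1
        · exact h2 ⟨hx1, hxy.trans hy.2⟩ ⟨hy1, hy.2⟩ hxy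
    · have : s = n + 1 := by omega
      subst this
      intro x hx y hy hxy
      have hx' : x = a (n+1) := le_antisymm hx.2 hx.1
      have hy' : y = a (n+1) := le_antisymm hy.2 hy.1
      rw [hx', hy']

lemma antitoneOn_glue (f : ℝ → ℝ) (a : ℕ → ℝ) (s : ℕ) :
    ∀ e, s ≤ e →
    (∀ i, s ≤ i → i < e → AntitoneOn f (Set.Icc (a i) (a (i+1)))) →
    (∀ i j, s ≤ i → i ≤ j → j ≤ e → a i ≤ a j) →
    AntitoneOn f (Set.Icc (a s) (a e)) := by
  intro e
  induction e with
  | zero =>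
    intro hse _ _
    have : s = 0 := by omega
    subst this
    intro x hx y hy hxy
    have hx' : x = a 0 := le_antisymm hx.2 hx.1
    have hy' : y = a 0 := le_antisymm hy.2 hy.1
    rw [hx', hy']
  | succ n ih =>
    intro hse hmono ha
    rcases Nat.lt_or_ge s (n+1) with hlt | hge
    · have h1 : AntitoneOn f (Set.Icc (a s) (a n)) :=
        ih (by omega) (fun i h1 h2 => hmono i h1 (by omega))
          (fun i j hi hij hj => ha i j hi hij (by omega))
      have h2 : AntitoneOn f (Set.Icc (a n) (a (n+1))) := hmono n (by omega) (by omega)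
      have hsn : a s ≤ a n := ha s n le_rfl (by omega) (by omega)
      have hnn : a n ≤ a (n+1) := ha n (n+1) (by omega) (by omega) le_rfl
      intro x hx y hy hxy
      rcases le_total y (a n) with hy1 | hy1
      · exact h1 ⟨hx.1, hxy.trans hy1⟩ ⟨hy.1, hy1⟩ hxy
      · rcases le_total x (a n) with hx1 | hx1
        · calc f y ≤ f (a n) := h2 ⟨le_rfl, hnn⟩ ⟨hy1, hy.2⟩ hy1
            _ ≤ f x := h1 ⟨hx.1, hx1⟩ ⟨hsn, le_rfl⟩ hx1
        · exact h2 ⟨hx1, hxy.trans hy.2⟩ ⟨hy1, hy.2⟩ hxy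
    · have : s = n + 1 := by omega
      subst this
      intro x hx y hy hxy
      have hx' : x = a (n+1) := le_antisymm hx.2 hx.1
      have hy' : y = a (n+1) := le_antisymm hy.2 hy.1
      rw [hx', hy']

lemma indicator_mul_form (P : ℝ → ℝ≥0∞) (e : ℝ → ℝ) (B : Set ℝ) (x : ℝ) :
    (e ⁻¹' B).indicator P x = P x * B.indicator (fun _ => (1:ℝ≥0∞)) (e x) := by
  by_cases h : e x ∈ B
  · rw [Set.indicator_of_mem (by exact h) P, Set.indicator_of_mem h, mul_one]
  · rw [Set.indicator_of_notMem (by exact h) P, Set.indicator_of_notMem h, mul_zero]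

lemma blockSelInc (μ : Measure ℝ) [IsFiniteMeasure μ]
    (hatom : ∀ x : ℝ, μ {x} = 0)
    (τ1 τ2 p : ℝ → ℝ) (hpm : Measurable p)
    (hp01 : ∀ x ∈ Set.Icc (0:ℝ) 1, p x ∈ Set.Icc (0:ℝ) 1)
    (hle : ∀ x ∈ Set.Icc (0:ℝ) 1, τ1 x ≤ τ2 x)
    (l r : ℝ) (hlr : l ≤ r) (h01 : Set.Icc l r ⊆ Set.Icc (0:ℝ) 1)
    (hm1 : MonotoneOn τ1 (Set.Icc l r)) (hm2 : MonotoneOn τ2 (Set.Icc l r)) :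
    ∃ T : ℝ → ℝ, Monotone T ∧
      (∀ x ∈ Set.Icc l r, τ1 x ≤ T x ∧ T x ≤ τ2 x) ∧
      (∀ A : Set ℝ, MeasurableSet A →
        (μ.restrict (Set.Ico l r)) (T ⁻¹' A) =
          ∫⁻ x in Set.Ico l r,
            (ENNReal.ofReal (p x) * A.indicator (fun _ => (1:ℝ≥0∞)) (τ1 x)
              + ENNReal.ofReal (1 - p x) * A.indicator (fun _ => (1:ℝ≥0∞)) (τ2 x)) ∂μ) := by
  classical
  set ρ := μ.restrict (Set.Ico l r) with hρdef
  set P1 : ℝ → ℝ≥0∞ := fun x => ENNReal.ofReal (p x) with hP1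
  set P2 : ℝ → ℝ≥0∞ := fun x => ENNReal.ofReal (1 - p x) with hP2
  have hP1m : Measurable P1 := hpm.ennreal_ofReal
  have hP2m : Measurable P2 := (measurable_const.sub hpm).ennreal_ofReal
  set e1 : ℝ → ℝ := fun x => τ1 (max l (min r x)) with he1def
  set e2 : ℝ → ℝ := fun x => τ2 (max l (min r x)) with he2def
  have he1mono : Monotone e1 := fun x y h =>
    hm1 (clampTo_mem hlr x) (clampTo_mem hlr y) (clampTo_mono h)
  have he2mono : Monotone e2 := fun x y h =>
    hm2 (clampTo_mem hlr x) (clampTo_mem hlr y) (clampTo_mono h)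
  have he1 : Measurable e1 := he1mono.measurable
  have he2 : Measurable e2 := he2mono.measurable
  have he1eq : ∀ x ∈ Set.Icc l r, e1 x = τ1 x := fun x hx => by
    simp only [he1def, clampTo_eq hx]
  have he2eq : ∀ x ∈ Set.Icc l r, e2 x = τ2 x := fun x hx => by
    simp only [he2def, clampTo_eq hx]
  set ν := (ρ.withDensity P1).map e1 + (ρ.withDensity P2).map e2 with hνdef
  have hρapp : ∀ {S : Set ℝ}, MeasurableSet S → ρ S = μ (S ∩ Set.Ico l r) :=
    fun hS => Measure.restrict_apply hS
  have hρatom : ∀ x : ℝ, ρ {x} = 0 := fun x =>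
    le_antisymm ((hρapp (measurableSet_singleton x)).le.trans
      ((measure_mono Set.inter_subset_left).trans (hatom x).le)) (zero_le)
  have hρIcoC : ρ (Set.Ico l r)ᶜ = 0 := by
    rw [hρapp measurableSet_Ico.compl, Set.compl_inter_self, measure_empty]
  have hρIccC : ρ (Set.Icc l r)ᶜ = 0 := by
    refine le_antisymm (le_trans (measure_mono ?_) hρIcoC.le) (zero_le)
    exact Set.compl_subset_compl.2 Set.Ico_subset_Icc_self
  have hdens : ∀ B : Set ℝ, MeasurableSet B →
      (ρ.withDensity P1) B + (ρ.withDensity P2) B = ρ B := by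
    intro B hB
    rw [withDensity_apply _ hB, withDensity_apply _ hB, ← lintegral_add_left hP1m]
    have heq1 : ∫⁻ x in B, (P1 x + P2 x) ∂ρ = ∫⁻ x in B, 1 ∂ρ := by
      refine setLIntegral_congr_fun_ae hB ?_
      filter_upwards [ae_restrict_mem measurableSet_Ico] with x hx _
      have hx01 : x ∈ Set.Icc (0:ℝ) 1 := h01 (Set.Ico_subset_Icc_self hx)
      have hp := hp01 x hx01
      simp only [hP1, hP2]
      rw [← ENNReal.ofReal_add hp.1 (by linarith [hp.2])]
      norm_num
    rw [heq1, setLIntegral_one]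
  have hνapp : ∀ B : Set ℝ, MeasurableSet B →
      ν B = (ρ.withDensity P1) (e1 ⁻¹' B) + (ρ.withDensity P2) (e2 ⁻¹' B) := by
    intro B hB
    rw [hνdef, Measure.add_apply, Measure.map_apply he1 hB, Measure.map_apply he2 hB]
  have hmass : ν Set.univ = ρ Set.univ := by
    rw [hνapp Set.univ MeasurableSet.univ, Set.preimage_univ, Set.preimage_univ]
    exact hdens Set.univ MeasurableSet.univ
  haveI : IsFiniteMeasure ν := by
    constructor
    rw [hmass]
    exact lt_of_le_of_lt (Measure.restrict_apply_le _ _) (measure_lt_top μ _)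
  have hACnull : ∀ (Pd : ℝ → ℝ≥0∞) (S : Set ℝ), MeasurableSet S →
      S ∩ Set.Ico l r = ∅ → (ρ.withDensity Pd) S = 0 := by
    intro Pd S hS hint
    refine (withDensity_absolutelyContinuous ρ Pd) ?_
    rw [hρapp hS, hint, measure_empty]
  have hkeymono : ∀ (Pd : ℝ → ℝ≥0∞) (S S' : Set ℝ), MeasurableSet S' →
      (S ∩ Set.Ico l r ⊆ S') → (ρ.withDensity Pd) S ≤ (ρ.withDensity Pd) S' := by
    intro Pd S S' hS' hsub
    calc (ρ.withDensity Pd) S ≤ (ρ.withDensity Pd) (S' ∪ (Set.Ico l r)ᶜ) := by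
          refine measure_mono ?_
          intro z hz
          by_cases hzin : z ∈ Set.Ico l r
          · exact Or.inl (hsub ⟨hz, hzin⟩)
          · exact Or.inr hzin
      _ ≤ (ρ.withDensity Pd) S' + (ρ.withDensity Pd) (Set.Ico l r)ᶜ := measure_union_le _ _
      _ = (ρ.withDensity Pd) S' := by
          rw [hACnull _ _ measurableSet_Ico.compl (Set.compl_inter_self _), add_zero]
  have hIccmem : ∀ {x : ℝ}, x ∈ Set.Ico l r → x ∈ Set.Icc l r :=
    fun hx => Set.Ico_subset_Icc_self hx
  -- hypotheses of incBlock
  have hg12 : ∀ x ∈ Set.Icc l r, τ1 x ≤ τ2 x := fun x hx => hle x (h01 hx)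
  have hbot : ν (Set.Iio (τ1 l)) = 0 := by
    rw [hνapp _ measurableSet_Iio]
    have h1 : e1 ⁻¹' Set.Iio (τ1 l) ∩ Set.Ico l r = ∅ := by
      ext z
      simp only [Set.mem_inter_iff, Set.mem_preimage, Set.mem_Iio, Set.mem_empty_iff_false,
        iff_false, not_and]
      intro hz hzin
      have hzIcc := hIccmem hzin
      rw [he1eq z hzIcc] at hz
      exact absurd hz (not_lt.2 (hm1 ⟨le_rfl, hlr⟩ hzIcc hzIcc.1))
    have h2 : e2 ⁻¹' Set.Iio (τ1 l) ∩ Set.Ico l r = ∅ := by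
      ext z
      simp only [Set.mem_inter_iff, Set.mem_preimage, Set.mem_Iio, Set.mem_empty_iff_false,
        iff_false, not_and]
      intro hz hzin
      have hzIcc := hIccmem hzin
      rw [he2eq z hzIcc] at hz
      have : τ1 l ≤ τ2 z := le_trans (hm1 ⟨le_rfl, hlr⟩ hzIcc hzIcc.1) (hg12 z hzIcc)
      exact absurd hz (not_lt.2 this)
    rw [hACnull P1 _ (he1 measurableSet_Iio) h1, hACnull P2 _ (he2 measurableSet_Iio) h2,
      add_zero]
  have hup : ∀ x ∈ Set.Icc l r, ρ (Set.Iic x) ≤ ν (Set.Iic (τ2 x)) := by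
    intro x hx
    rw [hνapp _ measurableSet_Iic, ← hdens (Set.Iic x) measurableSet_Iic]
    refine add_le_add ?_ ?_
    · refine hkeymono P1 _ _ (he1 measurableSet_Iic) ?_
      rintro z ⟨hz1, hz2⟩
      have hzIcc := hIccmem hz2
      simp only [Set.mem_preimage, Set.mem_Iic]
      rw [he1eq z hzIcc]
      exact le_trans (hm1 hzIcc hx hz1) (hg12 x hx)
    · refine hkeymono P2 _ _ (he2 measurableSet_Iic) ?_
      rintro z ⟨hz1, hz2⟩
      have hzIcc := hIccmem hz2
      simp only [Set.mem_preimage, Set.mem_Iic]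
      rw [he2eq z hzIcc]
      exact hm2 hzIcc hx hz1
  have hlow : ∀ x ∈ Set.Icc l r, ∀ s < τ1 x, ν (Set.Iic s) ≤ ρ (Set.Iio x) := by
    intro x hx s hs
    rw [hνapp _ measurableSet_Iic, ← hdens (Set.Iio x) measurableSet_Iio]
    refine add_le_add ?_ ?_
    · refine hkeymono P1 _ _ measurableSet_Iio ?_
      rintro z ⟨hz1, hz2⟩
      have hzIcc := hIccmem hz2
      simp only [Set.mem_preimage, Set.mem_Iic] at hz1
      rw [he1eq z hzIcc] at hz1
      simp only [Set.mem_Iio]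
      by_contra hc
      push_neg at hc
      exact absurd (lt_of_le_of_lt hz1 hs) (not_lt.2 (hm1 hx hzIcc hc))
    · refine hkeymono P2 _ _ measurableSet_Iio ?_
      rintro z ⟨hz1, hz2⟩
      have hzIcc := hIccmem hz2
      simp only [Set.mem_preimage, Set.mem_Iic] at hz1
      rw [he2eq z hzIcc] at hz1
      simp only [Set.mem_Iio]
      by_contra hc
      push_neg at hc
      have : τ2 x ≤ τ2 z := hm2 hx hzIcc hc
      exact absurd (lt_of_le_of_lt hz1 (lt_of_lt_of_le hs (hg12 x hx))) (not_lt.2 this)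
  obtain ⟨T, hTmono, hTb, hTinv⟩ :=
    incBlock ρ ν l r hlr hρIccC hρatom τ1 τ2 hg12 hm1 hm2 hmass hbot hup hlow
  refine ⟨T, hTmono, hTb, ?_⟩
  intro A hA
  rw [hTinv A hA, hνapp A hA, withDensity_apply _ (he1 hA), withDensity_apply _ (he2 hA)]
  have hform1 : ∫⁻ x in e1 ⁻¹' A, P1 x ∂ρ = ∫⁻ x, (e1 ⁻¹' A).indicator P1 x ∂ρ :=
    (lintegral_indicator (he1 hA) P1).symm
  have hform2 : ∫⁻ x in e2 ⁻¹' A, P2 x ∂ρ = ∫⁻ x, (e2 ⁻¹' A).indicator P2 x ∂ρ :=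
    (lintegral_indicator (he2 hA) P2).symm
  rw [hform1, hform2, ← lintegral_add_left (hP1m.indicator (he1 hA))]
  have : ∫⁻ x, ((e1 ⁻¹' A).indicator P1 x + (e2 ⁻¹' A).indicator P2 x) ∂ρ
      = ∫⁻ x in Set.Ico l r,
          ((e1 ⁻¹' A).indicator P1 x + (e2 ⁻¹' A).indicator P2 x) ∂μ := by
    rw [hρdef]
  rw [this]
  refine setLIntegral_congr_fun_ae measurableSet_Ico ?_
  refine Filter.Eventually.of_forall ?_
  intro x hx
  have hxIcc := hIccmem hx
  rw [indicator_mul_form P1 e1 A x, indicator_mul_form P2 e2 A x, he1eq x hxIcc,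
    he2eq x hxIcc]

lemma blockSelDec (μ : Measure ℝ) [IsFiniteMeasure μ]
    (hatom : ∀ x : ℝ, μ {x} = 0)
    (τ1 τ2 p : ℝ → ℝ) (hpm : Measurable p)
    (hp01 : ∀ x ∈ Set.Icc (0:ℝ) 1, p x ∈ Set.Icc (0:ℝ) 1)
    (hle : ∀ x ∈ Set.Icc (0:ℝ) 1, τ1 x ≤ τ2 x)
    (l r : ℝ) (hlr : l ≤ r) (h01 : Set.Icc l r ⊆ Set.Icc (0:ℝ) 1)
    (hm1 : AntitoneOn τ1 (Set.Icc l r)) (hm2 : AntitoneOn τ2 (Set.Icc l r)) :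
    ∃ T : ℝ → ℝ, Antitone T ∧
      (∀ x ∈ Set.Icc l r, τ1 x ≤ T x ∧ T x ≤ τ2 x) ∧
      (∀ A : Set ℝ, MeasurableSet A →
        (μ.restrict (Set.Ico l r)) (T ⁻¹' A) =
          ∫⁻ x in Set.Ico l r,
            (ENNReal.ofReal (p x) * A.indicator (fun _ => (1:ℝ≥0∞)) (τ1 x)
              + ENNReal.ofReal (1 - p x) * A.indicator (fun _ => (1:ℝ≥0∞)) (τ2 x)) ∂μ) := by
  classical
  set ρ := μ.restrict (Set.Ico l r) with hρdef
  set P1 : ℝ → ℝ≥0∞ := fun x => ENNReal.ofReal (p x) with hP1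
  set P2 : ℝ → ℝ≥0∞ := fun x => ENNReal.ofReal (1 - p x) with hP2
  have hP1m : Measurable P1 := hpm.ennreal_ofReal
  have hP2m : Measurable P2 := (measurable_const.sub hpm).ennreal_ofReal
  set e1 : ℝ → ℝ := fun x => τ1 (max l (min r x)) with he1def
  set e2 : ℝ → ℝ := fun x => τ2 (max l (min r x)) with he2def
  have he1mono : Antitone e1 := fun x y h =>
    hm1 (clampTo_mem hlr x) (clampTo_mem hlr y) (clampTo_mono h)
  have he2mono : Antitone e2 := fun x y h =>
    hm2 (clampTo_mem hlr x) (clampTo_mem hlr y) (clampTo_mono h)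
  have he1 : Measurable e1 := he1mono.measurable
  have he2 : Measurable e2 := he2mono.measurable
  have he1eq : ∀ x ∈ Set.Icc l r, e1 x = τ1 x := fun x hx => by
    simp only [he1def, clampTo_eq hx]
  have he2eq : ∀ x ∈ Set.Icc l r, e2 x = τ2 x := fun x hx => by
    simp only [he2def, clampTo_eq hx]
  set ν := (ρ.withDensity P1).map e1 + (ρ.withDensity P2).map e2 with hνdef
  have hρapp : ∀ {S : Set ℝ}, MeasurableSet S → ρ S = μ (S ∩ Set.Ico l r) :=
    fun hS => Measure.restrict_apply hS
  have hρatom : ∀ x : ℝ, ρ {x} = 0 := fun x =>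
    le_antisymm ((hρapp (measurableSet_singleton x)).le.trans
      ((measure_mono Set.inter_subset_left).trans (hatom x).le)) (zero_le)
  have hρIcoC : ρ (Set.Ico l r)ᶜ = 0 := by
    rw [hρapp measurableSet_Ico.compl, Set.compl_inter_self, measure_empty]
  have hρIccC : ρ (Set.Icc l r)ᶜ = 0 := by
    refine le_antisymm (le_trans (measure_mono ?_) hρIcoC.le) (zero_le)
    exact Set.compl_subset_compl.2 Set.Ico_subset_Icc_self
  have hdens : ∀ B : Set ℝ, MeasurableSet B →
      (ρ.withDensity P1) B + (ρ.withDensity P2) B = ρ B := by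
    intro B hB
    rw [withDensity_apply _ hB, withDensity_apply _ hB, ← lintegral_add_left hP1m]
    have heq1 : ∫⁻ x in B, (P1 x + P2 x) ∂ρ = ∫⁻ x in B, 1 ∂ρ := by
      refine setLIntegral_congr_fun_ae hB ?_
      filter_upwards [ae_restrict_mem measurableSet_Ico] with x hx _
      have hx01 : x ∈ Set.Icc (0:ℝ) 1 := h01 (Set.Ico_subset_Icc_self hx)
      have hp := hp01 x hx01
      simp only [hP1, hP2]
      rw [← ENNReal.ofReal_add hp.1 (by linarith [hp.2])]
      norm_num
    rw [heq1, setLIntegral_one]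
  have hνapp : ∀ B : Set ℝ, MeasurableSet B →
      ν B = (ρ.withDensity P1) (e1 ⁻¹' B) + (ρ.withDensity P2) (e2 ⁻¹' B) := by
    intro B hB
    rw [hνdef, Measure.add_apply, Measure.map_apply he1 hB, Measure.map_apply he2 hB]
  have hmass : ν Set.univ = ρ Set.univ := by
    rw [hνapp Set.univ MeasurableSet.univ, Set.preimage_univ, Set.preimage_univ]
    exact hdens Set.univ MeasurableSet.univ
  haveI : IsFiniteMeasure ν := by
    constructor
    rw [hmass]
    exact lt_of_le_of_lt (Measure.restrict_apply_le _ _) (measure_lt_top μ _)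
  have hACnull : ∀ (Pd : ℝ → ℝ≥0∞) (S : Set ℝ), MeasurableSet S →
      S ∩ Set.Ico l r = ∅ → (ρ.withDensity Pd) S = 0 := by
    intro Pd S hS hint
    refine (withDensity_absolutelyContinuous ρ Pd) ?_
    rw [hρapp hS, hint, measure_empty]
  have hkeymono : ∀ (Pd : ℝ → ℝ≥0∞) (S S' : Set ℝ), MeasurableSet S' →
      (S ∩ Set.Ico l r ⊆ S') → (ρ.withDensity Pd) S ≤ (ρ.withDensity Pd) S' := by
    intro Pd S S' hS' hsub
    calc (ρ.withDensity Pd) S ≤ (ρ.withDensity Pd) (S' ∪ (Set.Ico l r)ᶜ) := by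
          refine measure_mono ?_
          intro z hz
          by_cases hzin : z ∈ Set.Ico l r
          · exact Or.inl (hsub ⟨hz, hzin⟩)
          · exact Or.inr hzin
      _ ≤ (ρ.withDensity Pd) S' + (ρ.withDensity Pd) (Set.Ico l r)ᶜ := measure_union_le _ _
      _ = (ρ.withDensity Pd) S' := by
          rw [hACnull _ _ measurableSet_Ico.compl (Set.compl_inter_self _), add_zero]
  have hIccmem : ∀ {x : ℝ}, x ∈ Set.Ico l r → x ∈ Set.Icc l r :=
    fun hx => Set.Ico_subset_Icc_self hx
  -- hypotheses of incBlock
  have hg12 : ∀ x ∈ Set.Icc l r, τ1 x ≤ τ2 x := fun x hx => hle x (h01 hx)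
  have hbot : ν (Set.Iio (τ1 r)) = 0 := by
    rw [hνapp _ measurableSet_Iio]
    have h1 : e1 ⁻¹' Set.Iio (τ1 r) ∩ Set.Ico l r = ∅ := by
      ext z
      simp only [Set.mem_inter_iff, Set.mem_preimage, Set.mem_Iio, Set.mem_empty_iff_false,
        iff_false, not_and]
      intro hz hzin
      have hzIcc := hIccmem hzin
      rw [he1eq z hzIcc] at hz
      exact absurd hz (not_lt.2 (hm1 hzIcc ⟨hlr, le_rfl⟩ hzIcc.2))
    have h2 : e2 ⁻¹' Set.Iio (τ1 r) ∩ Set.Ico l r = ∅ := by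
      ext z
      simp only [Set.mem_inter_iff, Set.mem_preimage, Set.mem_Iio, Set.mem_empty_iff_false,
        iff_false, not_and]
      intro hz hzin
      have hzIcc := hIccmem hzin
      rw [he2eq z hzIcc] at hz
      have : τ1 r ≤ τ2 z := le_trans (hm1 hzIcc ⟨hlr, le_rfl⟩ hzIcc.2) (hg12 z hzIcc)
      exact absurd hz (not_lt.2 this)
    rw [hACnull P1 _ (he1 measurableSet_Iio) h1, hACnull P2 _ (he2 measurableSet_Iio) h2,
      add_zero]
  have hup : ∀ x ∈ Set.Icc l r, ρ (Set.Ici x) ≤ ν (Set.Iic (τ2 x)) := by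
    intro x hx
    rw [hνapp _ measurableSet_Iic, ← hdens (Set.Ici x) measurableSet_Ici]
    refine add_le_add ?_ ?_
    · refine hkeymono P1 _ _ (he1 measurableSet_Iic) ?_
      rintro z ⟨hz1, hz2⟩
      have hzIcc := hIccmem hz2
      simp only [Set.mem_preimage, Set.mem_Iic]
      rw [he1eq z hzIcc]
      exact le_trans (hm1 hx hzIcc hz1) (hg12 x hx)
    · refine hkeymono P2 _ _ (he2 measurableSet_Iic) ?_
      rintro z ⟨hz1, hz2⟩
      have hzIcc := hIccmem hz2
      simp only [Set.mem_preimage, Set.mem_Iic]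
      rw [he2eq z hzIcc]
      exact hm2 hx hzIcc hz1
  have hlow : ∀ x ∈ Set.Icc l r, ∀ s < τ1 x, ν (Set.Iic s) ≤ ρ (Set.Ioi x) := by
    intro x hx s hs
    rw [hνapp _ measurableSet_Iic, ← hdens (Set.Ioi x) measurableSet_Ioi]
    refine add_le_add ?_ ?_
    · refine hkeymono P1 _ _ measurableSet_Ioi ?_
      rintro z ⟨hz1, hz2⟩
      have hzIcc := hIccmem hz2
      simp only [Set.mem_preimage, Set.mem_Iic] at hz1
      rw [he1eq z hzIcc] at hz1
      simp only [Set.mem_Ioi]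
      by_contra hc
      push_neg at hc
      exact absurd (lt_of_le_of_lt hz1 hs) (not_lt.2 (hm1 hzIcc hx hc))
    · refine hkeymono P2 _ _ measurableSet_Ioi ?_
      rintro z ⟨hz1, hz2⟩
      have hzIcc := hIccmem hz2
      simp only [Set.mem_preimage, Set.mem_Iic] at hz1
      rw [he2eq z hzIcc] at hz1
      simp only [Set.mem_Ioi]
      by_contra hc
      push_neg at hc
      have : τ2 x ≤ τ2 z := hm2 hzIcc hx hc
      exact absurd (lt_of_le_of_lt hz1 (lt_of_lt_of_le hs (hg12 x hx))) (not_lt.2 this)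
  obtain ⟨T, hTmono, hTb, hTinv⟩ :=
    decBlock ρ ν l r hlr hρIccC hρatom τ1 τ2 hg12 hm1 hm2 hmass hbot hup hlow
  refine ⟨T, hTmono, hTb, ?_⟩
  intro A hA
  rw [hTinv A hA, hνapp A hA, withDensity_apply _ (he1 hA), withDensity_apply _ (he2 hA)]
  have hform1 : ∫⁻ x in e1 ⁻¹' A, P1 x ∂ρ = ∫⁻ x, (e1 ⁻¹' A).indicator P1 x ∂ρ :=
    (lintegral_indicator (he1 hA) P1).symm
  have hform2 : ∫⁻ x in e2 ⁻¹' A, P2 x ∂ρ = ∫⁻ x, (e2 ⁻¹' A).indicator P2 x ∂ρ :=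
    (lintegral_indicator (he2 hA) P2).symm
  rw [hform1, hform2, ← lintegral_add_left (hP1m.indicator (he1 hA))]
  have : ∫⁻ x, ((e1 ⁻¹' A).indicator P1 x + (e2 ⁻¹' A).indicator P2 x) ∂ρ
      = ∫⁻ x in Set.Ico l r,
          ((e1 ⁻¹' A).indicator P1 x + (e2 ⁻¹' A).indicator P2 x) ∂μ := by
    rw [hρdef]
  rw [this]
  refine setLIntegral_congr_fun_ae measurableSet_Ico ?_
  refine Filter.Eventually.of_forall ?_
  intro x hx
  have hxIcc := hIccmem hx
  rw [indicator_mul_form P1 e1 A x, indicator_mul_form P2 e2 A x, he1eq x hxIcc,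
    he2eq x hxIcc]

end AuxSelector

/-- (Theorem 3 of the paper.)  If `τ1 ≤ τ2` are piecewise `C¹`, piecewise
expanding (slope `> 2`) boundary maps having the same monotonicity on the intervals of a
common partition, and `f` is an a.e. positive invariant density of the random map
`R = {τ1, τ2; p, 1-p}`, then `f` is also the invariant density of some selector `T` between
`τ1` and `τ2`, monotone on each partition interval. -/

theorem random_map_density_is_selector_density
    (m : ℕ) (hm : 0 < m) (a : ℕ → ℝ) (ha0 : a 0 = 0) (ham : a m = 1)
    (hamono : ∀ i < m, a i < a (i + 1))
    (τ1 τ2 : ℝ → ℝ)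
    (hmap1 : MapsTo τ1 (Set.Icc (0:ℝ) 1) (Set.Icc (0:ℝ) 1))
    (hmap2 : MapsTo τ2 (Set.Icc (0:ℝ) 1) (Set.Icc (0:ℝ) 1))
    (hle : ∀ x ∈ Set.Icc (0:ℝ) 1, τ1 x ≤ τ2 x)
    (hC1 : ∀ j < m, ContDiffOn ℝ 1 τ1 (Set.Icc (a j) (a (j + 1)))
      ∧ ContDiffOn ℝ 1 τ2 (Set.Icc (a j) (a (j + 1))))
    (hsamemono : ∀ j < m,
        (StrictMonoOn τ1 (Set.Icc (a j) (a (j + 1)))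
          ∧ StrictMonoOn τ2 (Set.Icc (a j) (a (j + 1))))
      ∨ (StrictAntiOn τ1 (Set.Icc (a j) (a (j + 1)))
          ∧ StrictAntiOn τ2 (Set.Icc (a j) (a (j + 1)))))
    (hslope : ∀ j < m, ∀ x ∈ Set.Icc (a j) (a (j + 1)),
        2 < |derivWithin τ1 (Set.Icc (a j) (a (j + 1))) x|
      ∧ 2 < |derivWithin τ2 (Set.Icc (a j) (a (j + 1))) x|)
    (p : ℝ → ℝ) (hpm : Measurable p) (hp01 : ∀ x ∈ Set.Icc (0:ℝ) 1, p x ∈ Set.Icc (0:ℝ) 1)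
    (f : ℝ → ℝ) (hfd : IsDensity f) (hfpos : ∀ᵐ x ∂leb01, 0 < f x)
    (hinv : RMInvariant τ1 τ2 p (densMeasure f)) :
    ∃ T : ℝ → ℝ, Measurable T ∧
      (∀ x ∈ Set.Icc (0:ℝ) 1, τ1 x ≤ T x ∧ T x ≤ τ2 x) ∧
      (∀ j < m, MonotoneOn T (Set.Icc (a j) (a (j + 1)))
        ∨ AntitoneOn T (Set.Icc (a j) (a (j + 1)))) ∧
      (∀ A : Set ℝ, MeasurableSet A → densMeasure f (T ⁻¹' A) = densMeasure f A) := by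
  classical
  obtain ⟨hfmeas, hfnn, hfint⟩ := hfd
  -- basic facts about μ := densMeasure f
  have hInt : Integrable f leb01 := by
    by_contra hni
    have : (∫ x, f x ∂leb01) = 0 := integral_undef hni
    have h2 : (∫ x in Set.Icc (0:ℝ) 1, f x) = (∫ x, f x ∂leb01) := rfl
    rw [h2, this] at hfint
    norm_num at hfint
  have hwdapp : ∀ {S : Set ℝ}, MeasurableSet S →
      densMeasure f S = ∫⁻ x in S, ENNReal.ofReal (f x) ∂leb01 :=
    fun hS => withDensity_apply _ hS
  have hleb01 : ∀ {S : Set ℝ}, MeasurableSet S → leb01 S = volume (S ∩ Set.Icc (0:ℝ) 1) :=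
    fun hS => Measure.restrict_apply hS
  haveI hμfin : IsFiniteMeasure (densMeasure f) := by
    constructor
    rw [hwdapp MeasurableSet.univ, Measure.restrict_univ,
      ← ofReal_integral_eq_lintegral_ofReal hInt (Filter.Eventually.of_forall hfnn)]
    exact ENNReal.ofReal_lt_top
  have hatomμ : ∀ x : ℝ, densMeasure f {x} = 0 := by
    intro x
    rw [hwdapp (measurableSet_singleton x)]
    refine setLIntegral_measure_zero _ _ ?_
    rw [hleb01 (measurableSet_singleton x)]
    exact le_antisymm ((measure_mono Set.inter_subset_left).trans
      Real.volume_singleton.le) (zero_le)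
  have hIccC : densMeasure f (Set.Icc (0:ℝ) 1)ᶜ = 0 := by
    rw [hwdapp measurableSet_Icc.compl]
    refine setLIntegral_measure_zero _ _ ?_
    rw [hleb01 measurableSet_Icc.compl, Set.compl_inter_self, measure_empty]
  have hIcoC : densMeasure f (Set.Ico (0:ℝ) 1)ᶜ = 0 := by
    have hsub : (Set.Ico (0:ℝ) 1)ᶜ ⊆ (Set.Icc (0:ℝ) 1)ᶜ ∪ {1} := by
      intro z hz
      by_cases hzin : z ∈ Set.Icc (0:ℝ) 1
      · right
        simp only [Set.mem_compl_iff, Set.mem_Ico, not_and, not_lt] at hz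
        exact le_antisymm hzin.2 (hz hzin.1)
      · exact Or.inl hzin
    refine le_antisymm (((measure_mono hsub).trans (measure_union_le _ _)).trans ?_) (zero_le)
    rw [hIccC, hatomμ]; simp
  -- index monotonicity of a
  have haLe : ∀ i j : ℕ, i ≤ j → j ≤ m → a i ≤ a j := by
    intro i j hij hjm
    induction j with
    | zero => have : i = 0 := by omega
              rw [this]
    | succ n ih =>
      rcases Nat.lt_or_ge i (n+1) with h | h
      · exact le_trans (ih (by omega) (by omega)) (hamono n (by omega)).le
      · have : i = n+1 := by omega
        rw [this]
  have haLt : ∀ i j : ℕ, i < j → j ≤ m → a i < a j := by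
    intro i j hij hjm
    have h1 : a i ≤ a (j-1) := haLe i (j-1) (by omega) (by omega)
    have h2 : a (j-1) < a (j-1+1) := hamono (j-1) (by omega)
    rw [Nat.sub_add_cancel (by omega)] at h2
    exact lt_of_le_of_lt h1 h2
  have ha01 : ∀ k : ℕ, k ≤ m → a k ∈ Set.Icc (0:ℝ) 1 := by
    intro k hk
    exact ⟨ha0 ▸ haLe 0 k (by omega) hk, ham ▸ haLe k m hk le_rfl⟩
  -- orientations
  set o : ℕ → Bool := fun j =>
    if StrictMonoOn τ1 (Set.Icc (a j) (a (j+1))) then true else false with ho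
  have ho_true : ∀ j, j < m → o j = true →
      StrictMonoOn τ1 (Set.Icc (a j) (a (j+1))) ∧ StrictMonoOn τ2 (Set.Icc (a j) (a (j+1))) := by
    intro j hj h
    have hc : StrictMonoOn τ1 (Set.Icc (a j) (a (j+1))) := by
      by_contra hc
      have : o j = false := by simp only [ho, if_neg hc]
      exact absurd (h.symm.trans this) (by decide)
    rcases hsamemono j hj with ⟨h1, h2⟩ | ⟨h1, h2⟩
    · exact ⟨h1, h2⟩
    · have hjj := hamono j hj
      have hmem1 : a j ∈ Set.Icc (a j) (a (j+1)) := ⟨le_rfl, hjj.le⟩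
      have hmem2 : a (j+1) ∈ Set.Icc (a j) (a (j+1)) := ⟨hjj.le, le_rfl⟩
      exact absurd (hc hmem1 hmem2 hjj) (not_lt.2 (h1 hmem1 hmem2 hjj).le)
  have ho_false : ∀ j, j < m → o j = false →
      StrictAntiOn τ1 (Set.Icc (a j) (a (j+1))) ∧ StrictAntiOn τ2 (Set.Icc (a j) (a (j+1))) := by
    intro j hj h
    have hc : ¬ StrictMonoOn τ1 (Set.Icc (a j) (a (j+1))) := by
      intro hc
      have : o j = true := by simp only [ho, if_pos hc]
      exact absurd (h.symm.trans this) (by decide)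
    rcases hsamemono j hj with ⟨h1, h2⟩ | ⟨h1, h2⟩
    · exact absurd h1 hc
    · exact ⟨h1, h2⟩
  -- the blocks
  set S : Finset ℕ := (Finset.range m).filter (fun s => runStart o s = s) with hS
  set Bk : ℕ → Set ℝ := fun s => Set.Ico (a s) (a (runNext o m s)) with hBk
  have hSm : ∀ s ∈ S, s < m ∧ runStart o s = s := by
    intro s hs
    rw [hS, Finset.mem_filter, Finset.mem_range] at hs
    exact hs
  have hnxtm : ∀ s, s < m → runNext o m s ≤ m := fun s hs => runNext_le o hs
  have hblockmono : ∀ s ∈ S,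
      (o s = true → MonotoneOn τ1 (Set.Icc (a s) (a (runNext o m s)))
        ∧ MonotoneOn τ2 (Set.Icc (a s) (a (runNext o m s)))) ∧
      (o s = false → AntitoneOn τ1 (Set.Icc (a s) (a (runNext o m s)))
        ∧ AntitoneOn τ2 (Set.Icc (a s) (a (runNext o m s)))) := by
    intro s hs
    obtain ⟨hsm, _⟩ := hSm s hs
    have hse : s ≤ runNext o m s := (lt_runNext o m s).le
    have hem : runNext o m s ≤ m := hnxtm s hsm
    have hchain : ∀ i j : ℕ, s ≤ i → i ≤ j → j ≤ runNext o m s → a i ≤ a j :=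
      fun i j h1 h2 h3 => haLe i j h2 (le_trans h3 hem)
    have hoi : ∀ i, s ≤ i → i < runNext o m s → o i = o s :=
      fun i h1 h2 => runo_eq_of_mem o h1 h2
    have him : ∀ i, s ≤ i → i < runNext o m s → i < m := fun i h1 h2 => by
      have := hnxtm s hsm; omega
    constructor
    · intro hos
      constructor
      · exact monotoneOn_glue τ1 a s (runNext o m s) hse
          (fun i h1 h2 => ((ho_true i (him i h1 h2) ((hoi i h1 h2).trans hos)).1).monotoneOn)
          hchain
      · exact monotoneOn_glue τ2 a s (runNext o m s) hse
          (fun i h1 h2 => ((ho_true i (him i h1 h2) ((hoi i h1 h2).trans hos)).2).monotoneOn)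
          hchain
    · intro hos
      constructor
      · exact antitoneOn_glue τ1 a s (runNext o m s) hse
          (fun i h1 h2 => ((ho_false i (him i h1 h2) ((hoi i h1 h2).trans hos)).1).antitoneOn)
          hchain
      · exact antitoneOn_glue τ2 a s (runNext o m s) hse
          (fun i h1 h2 => ((ho_false i (him i h1 h2) ((hoi i h1 h2).trans hos)).2).antitoneOn)
          hchain
  -- choose the block selectors
  have hTbex : ∀ s : ℕ, ∃ Tb : ℝ → ℝ, s ∈ S →
      ((o s = true → Monotone Tb) ∧ (o s = false → Antitone Tb)) ∧
      (∀ x ∈ Set.Icc (a s) (a (runNext o m s)), τ1 x ≤ Tb x ∧ Tb x ≤ τ2 x) ∧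
      (∀ A : Set ℝ, MeasurableSet A →
        ((densMeasure f).restrict (Bk s)) (Tb ⁻¹' A) =
          ∫⁻ x in Bk s,
            (ENNReal.ofReal (p x) * A.indicator (fun _ => (1:ℝ≥0∞)) (τ1 x)
              + ENNReal.ofReal (1 - p x) * A.indicator (fun _ => (1:ℝ≥0∞)) (τ2 x))
            ∂(densMeasure f)) := by
    intro s
    by_cases hs : s ∈ S
    · obtain ⟨hsm, _⟩ := hSm s hs
      have hlr : a s ≤ a (runNext o m s) := haLe s _ (lt_runNext o m s).le (hnxtm s hsm)
      have h01 : Set.Icc (a s) (a (runNext o m s)) ⊆ Set.Icc (0:ℝ) 1 :=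
        Set.Icc_subset_Icc (ha01 s (by omega)).1 (ha01 _ (hnxtm s hsm)).2
      rcases Bool.eq_false_or_eq_true (o s) with hos | hos
      · obtain ⟨Tb, h1, h2, h3⟩ := blockSelInc (densMeasure f) hatomμ τ1 τ2 p hpm hp01 hle
          (a s) (a (runNext o m s)) hlr h01
          ((hblockmono s hs).1 hos).1 ((hblockmono s hs).1 hos).2
        exact ⟨Tb, fun _ => ⟨⟨fun _ => h1,
          fun hf => absurd (hos.symm.trans hf) (by decide)⟩, h2, h3⟩⟩
      · obtain ⟨Tb, h1, h2, h3⟩ := blockSelDec (densMeasure f) hatomμ τ1 τ2 p hpm hp01 hle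
          (a s) (a (runNext o m s)) hlr h01
          ((hblockmono s hs).2 hos).1 ((hblockmono s hs).2 hos).2
        exact ⟨Tb, fun _ => ⟨⟨fun hf => absurd (hos.symm.trans hf) (by decide),
          fun _ => h1⟩, h2, h3⟩⟩
    · exact ⟨fun _ => 0, fun h => absurd h hs⟩
  choose Tb hTbp using hTbex
  -- define T
  set endv : ℝ := if o (runStart o (m-1)) = true then τ2 1 else τ1 1 with hendv
  set T : ℝ → ℝ := fun x =>
    (∑ s ∈ S, if x ∈ Bk s then
        (if x = a s ∧ s ≠ 0 then (if o s = true then τ1 (a s) else τ2 (a s)) else Tb s x)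
      else 0)
    + (if x = 1 then endv else 0) with hT
  -- uniqueness / covering of blocks
  have huniq : ∀ x : ℝ, ∀ s ∈ S, ∀ s' ∈ S, x ∈ Bk s → x ∈ Bk s' → s = s' := by
    have key : ∀ s ∈ S, ∀ s' ∈ S, s < s' → ∀ x, x ∈ Bk s → x ∈ Bk s' → False := by
      intro s hs s' hs' hss' x hx hx'
      obtain ⟨hsm', hst'⟩ := hSm s' hs'
      obtain ⟨hsm, _⟩ := hSm s hs
      have h1 : runNext o m s ≤ s' := runNext_le_of_bd o hss' (Or.inr hst')
      have h2 : a (runNext o m s) ≤ a s' := haLe _ _ h1 (by omega)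
      exact absurd (lt_of_lt_of_le hx.2 (h2.trans hx'.1)) (lt_irrefl x)
    intro x s hs s' hs' hx hx'
    rcases lt_trichotomy s s' with h | h | h
    · exact absurd (key s hs s' hs' h x hx hx') not_false
    · exact h
    · exact absurd (key s' hs' s hs h x hx' hx) not_false
  have hmemB : ∀ x, x ∈ Set.Ico (0:ℝ) 1 → ∃ s ∈ S, x ∈ Bk s := by
    intro x hx
    have hP0 : a 0 ≤ x := ha0 ▸ hx.1
    set j := Nat.findGreatest (fun j => a j ≤ x) (m-1) with hj
    have hjle : j ≤ m - 1 := Nat.findGreatest_le (m-1)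
    have hjP : a j ≤ x := by
      rcases Nat.eq_zero_or_pos j with h | h
      · rw [h]; exact hP0
      · exact Nat.findGreatest_spec (P := fun j => a j ≤ x) (m := 0) (by omega) hP0
    have hjP2 : x < a (j+1) := by
      rcases Nat.lt_or_ge j (m-1) with h | h
      · by_contra hc
        push_neg at hc
        exact absurd hc (Nat.findGreatest_is_greatest
          (P := fun i => a i ≤ x) (n := m-1) (by omega) (by omega))
      · have hjm : j = m - 1 := by omega
        have : j + 1 = m := by omega
        rw [this, ham]
        exact hx.2
    refine ⟨runStart o j, ?_, ?_, ?_⟩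
    · rw [hS, Finset.mem_filter, Finset.mem_range]
      refine ⟨by have := runStart_le o j; omega, ?_⟩
      exact runStart_idem o le_rfl (runStart_le o j)
    · exact le_trans (haLe _ j (runStart_le o j) (by omega)) hjP
    · have h1 : runNext o m (runStart o j) = runNext o m j := runNext_runStart o (by omega)
      show x < a (runNext o m (runStart o j))
      rw [h1]
      exact lt_of_lt_of_le hjP2 (haLe (j+1) _ (lt_runNext o m j) (hnxtm j (by omega)))
  have hcover : ⋃ s ∈ S, Bk s = Set.Ico (0:ℝ) 1 := by
    apply Set.Subset.antisymm
    · intro x hx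
      simp only [Set.mem_iUnion] at hx
      obtain ⟨s, hs, hxs⟩ := hx
      obtain ⟨hsm, _⟩ := hSm s hs
      exact ⟨(ha01 s (by omega)).1.trans hxs.1,
        lt_of_lt_of_le hxs.2 (ha01 _ (hnxtm s hsm)).2⟩
    · intro x hx
      obtain ⟨s, hs, hxs⟩ := hmemB x hx
      exact Set.mem_iUnion.2 ⟨s, Set.mem_iUnion.2 ⟨hs, hxs⟩⟩
  have hnotone : ∀ s ∈ S, (1:ℝ) ∉ Bk s := by
    intro s hs h1
    obtain ⟨hsm, _⟩ := hSm s hs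
    exact absurd (lt_of_lt_of_le h1.2 (ha01 _ (hnxtm s hsm)).2) (lt_irrefl 1)
  have hval : ∀ s ∈ S, ∀ x ∈ Bk s, T x =
      (if x = a s ∧ s ≠ 0 then (if o s = true then τ1 (a s) else τ2 (a s)) else Tb s x) := by
    intro s hs x hx
    have hx1 : x ≠ 1 := by
      intro h
      exact hnotone s hs (h ▸ hx)
    rw [hT]
    simp only
    rw [if_neg hx1, add_zero]
    rw [Finset.sum_eq_single_of_mem s hs]
    · rw [if_pos hx]
    · intro b hb hbs
      rw [if_neg]
      intro hxb
      exact hbs (huniq x b hb s hs hxb hx)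
  have hval1 : T 1 = endv := by
    have hz : ∀ s ∈ S, (if (1:ℝ) ∈ Bk s then
        (if (1:ℝ) = a s ∧ s ≠ 0 then (if o s = true then τ1 (a s) else τ2 (a s)) else Tb s 1)
      else 0) = 0 := fun s hs => if_neg (hnotone s hs)
    rw [hT]
    simp only
    rw [Finset.sum_congr rfl hz, Finset.sum_const, smul_zero, zero_add]
    simp
  -- measurability
  have hTbmeas : ∀ s ∈ S, Measurable (Tb s) := by
    intro s hs
    rcases Bool.eq_false_or_eq_true (o s) with hos | hos
    · exact ((hTbp s hs).1.1 hos).measurable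
    · exact ((hTbp s hs).1.2 hos).measurable
  have hTmeas : Measurable T := by
    rw [hT]
    refine Measurable.add ?_ ?_
    · refine Finset.measurable_sum S ?_
      intro s hs
      have hcond : MeasurableSet {x : ℝ | x = a s ∧ s ≠ 0} := by
        by_cases hs0 : s = 0
        · have : {x : ℝ | x = a s ∧ s ≠ 0} = ∅ := by ext z; simp [hs0]
          rw [this]; exact MeasurableSet.empty
        · have : {x : ℝ | x = a s ∧ s ≠ 0} = {a s} := by ext z; simp [hs0]
          rw [this]; exact measurableSet_singleton _
      have hinner : Measurable (fun x => if x = a s ∧ s ≠ 0 then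
          (if o s = true then τ1 (a s) else τ2 (a s)) else Tb s x) :=
        Measurable.ite hcond measurable_const (hTbmeas s hs)
      exact Measurable.ite measurableSet_Ico hinner measurable_const
    · have : MeasurableSet {x : ℝ | x = 1} := by
        rw [Set.setOf_eq_eq_singleton]; exact measurableSet_singleton _
      exact Measurable.ite this measurable_const measurable_const
  have hIccB01 : ∀ s ∈ S, Set.Icc (a s) (a (runNext o m s)) ⊆ Set.Icc (0:ℝ) 1 := by
    intro s hs
    obtain ⟨hsm, _⟩ := hSm s hs
    exact Set.Icc_subset_Icc (ha01 s (by omega)).1 (ha01 _ (hnxtm s hsm)).2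
  refine ⟨T, hTmeas, ?_, ?_, ?_⟩
  · -- bounds
    intro x hx
    rcases lt_or_eq_of_le hx.2 with hlt | heq
    · obtain ⟨s, hs, hxs⟩ := hmemB x ⟨hx.1, hlt⟩
      have hxIcc : x ∈ Set.Icc (a s) (a (runNext o m s)) := Set.Ico_subset_Icc_self hxs
      rw [hval s hs x hxs]
      by_cases hov : x = a s ∧ s ≠ 0
      · rw [if_pos hov]
        rcases Bool.eq_false_or_eq_true (o s) with hos | hos
        · simp only [hos, if_true]
          rw [← hov.1]
          exact ⟨le_rfl, hle x hx⟩
        · simp only [hos, Bool.false_eq_true, if_false]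
          rw [← hov.1]
          exact ⟨hle x hx, le_rfl⟩
      · rw [if_neg hov]
        exact (hTbp s hs).2.1 x hxIcc
    · rw [heq, hval1, hendv]
      rcases Bool.eq_false_or_eq_true (o (runStart o (m-1))) with hos | hos
      · simp only [hos, if_true]
        exact ⟨hle 1 (by norm_num), le_rfl⟩
      · simp only [hos, Bool.false_eq_true, if_false]
        exact ⟨le_rfl, hle 1 (by norm_num)⟩
  · -- monotonicity on each piece
    intro j hj
    set s := runStart o j with hsdef
    have hsS : s ∈ S := by
      rw [hS, Finset.mem_filter, Finset.mem_range]
      exact ⟨by have := runStart_le o j; omega, runStart_idem o le_rfl (runStart_le o j)⟩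
    have hnxt : runNext o m s = runNext o m j := runNext_runStart o hj
    have hjnxt : j + 1 ≤ runNext o m j := lt_runNext o m j
    have hnm : runNext o m j ≤ m := hnxtm j hj
    have hosj : o s = o j := runStart_o o le_rfl (runStart_le o j)
    have hsj : s ≤ j := runStart_le o j
    have hpieceIcc : Set.Icc (a j) (a (j+1)) ⊆ Set.Icc (a s) (a (runNext o m s)) := by
      rw [hnxt]
      exact Set.Icc_subset_Icc (haLe s j hsj (by omega)) (haLe (j+1) _ hjnxt hnm)
    have hdesc : ∀ y ∈ Set.Icc (a j) (a (j+1)),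
        (T y = Tb s y ∧ y ∈ Set.Icc (a s) (a (runNext o m s)) ∧ ¬(y = a s ∧ s ≠ 0)) ∨
        (T y = (if o s = true then τ1 y else τ2 y) ∧ y = a s ∧ s ≠ 0) ∨
        (T y = (if o s = true then τ2 y else τ1 y) ∧ y = a (j+1)) := by
      intro y hy
      have hyIccB : y ∈ Set.Icc (a s) (a (runNext o m s)) := hpieceIcc hy
      rcases lt_or_eq_of_le hy.2 with hlt | heq
      · have hyBk : y ∈ Bk s := ⟨hyIccB.1, by
          show y < a (runNext o m s)
          rw [hnxt]
          exact lt_of_lt_of_le hlt (haLe (j+1) _ hjnxt hnm)⟩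
        have hTv := hval s hsS y hyBk
        by_cases hov : y = a s ∧ s ≠ 0
        · right; left
          refine ⟨?_, hov⟩
          rw [hTv, if_pos hov, hov.1]
        · left
          exact ⟨by rw [hTv, if_neg hov], hyIccB, hov⟩
      · rcases eq_or_lt_of_le hjnxt with heq2 | hlt2
        · right; right
          refine ⟨?_, heq⟩
          rcases eq_or_lt_of_le hnm with hRm | hRm
          · have hy1 : y = 1 := by rw [heq, heq2, hRm, ham]
            have hms : runStart o (m-1) = s := by
              exact runStart_eq_of_mem o (m := m) (j := j) (i := m-1) (by omega) (by omega)
            rw [hy1, hval1, hendv, hms]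
          · have hRS : runNext o m j ∈ S := by
              rw [hS, Finset.mem_filter, Finset.mem_range]
              refine ⟨hRm, ?_⟩
              rcases runNext_bd o m j with h | h
              · omega
              · exact h
            have hyaR : y = a (runNext o m j) := by rw [heq, heq2]
            have hyBkR : y ∈ Bk (runNext o m j) := by
              refine ⟨hyaR.ge, ?_⟩
              show y < a (runNext o m (runNext o m j))
              rw [hyaR]
              exact haLt _ _ (lt_runNext o m _) (hnxtm _ hRm)
            have hTv := hval _ hRS y hyBkR
            rw [hTv, if_pos ⟨hyaR, by omega⟩]
            have hne := runNext_boundary o hj hRm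
            rw [hosj, ← hyaR]
            rcases Bool.eq_false_or_eq_true (o j) with hoj2 | hoj2
            · have hof : o (runNext o m j) = false := by
                rcases Bool.eq_false_or_eq_true (o (runNext o m j)) with h | h
                · exact absurd (h.trans hoj2.symm) hne
                · exact h
              simp [hof, hoj2]
            · have hot : o (runNext o m j) = true := by
                rcases Bool.eq_false_or_eq_true (o (runNext o m j)) with h | h
                · exact h
                · exact absurd (h.trans hoj2.symm) hne
              simp [hot, hoj2]
        · have hyBk : y ∈ Bk s := ⟨hyIccB.1, by
            show y < a (runNext o m s)
            rw [hnxt, heq]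
            exact haLt (j+1) _ hlt2 hnm⟩
          have hTv := hval s hsS y hyBk
          have hov : ¬(y = a s ∧ s ≠ 0) := by
            rintro ⟨h1, _⟩
            have h2 : a s ≤ a j := haLe s j hsj (by omega)
            have h3 : a j < a (j+1) := hamono j hj
            rw [heq] at h1
            linarith
          left
          exact ⟨by rw [hTv, if_neg hov], hyIccB, hov⟩
    have h01B : ∀ y ∈ Set.Icc (a j) (a (j+1)), y ∈ Set.Icc (0:ℝ) 1 :=
      fun y hy => hIccB01 s hsS (hpieceIcc hy)
    have hbnd := (hTbp s hsS).2.1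
    rcases Bool.eq_false_or_eq_true (o s) with hos | hos
    · left
      have hTbmono : Monotone (Tb s) := (hTbp s hsS).1.1 hos
      have hτ1m : MonotoneOn τ1 (Set.Icc (a s) (a (runNext o m s))) :=
        ((hblockmono s hsS).1 hos).1
      have hτ2m : MonotoneOn τ2 (Set.Icc (a s) (a (runNext o m s))) :=
        ((hblockmono s hsS).1 hos).2
      intro u hu v hv huv
      rcases hdesc u hu with ⟨hTu, huB, _⟩ | ⟨hTu, hua, hus0⟩ | ⟨hTu, hua⟩ <;>
        rcases hdesc v hv with ⟨hTv, hvB, hvno⟩ | ⟨hTv, hva, hvs0⟩ | ⟨hTv, hva⟩ <;>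
        (try simp only [hos, if_true] at hTu hTv)
      · rw [hTu, hTv]; exact hTbmono huv
      · have huveq : u = v := le_antisymm huv
          (by rw [hva]; exact le_trans (haLe s j hsj (by omega)) hu.1)
        exact le_of_eq (congrArg T huveq)
      · rw [hTu, hTv]
        exact le_trans (hbnd u huB).2 (hτ2m huB (hpieceIcc hv) huv)
      · rw [hTu, hTv]
        exact le_trans (hτ1m (hpieceIcc hu) hvB huv) (hbnd v hvB).1
      · exact le_of_eq (congrArg T (hua.trans hva.symm))
      · rw [hTu, hTv]
        exact le_trans (hτ1m (hpieceIcc hu) (hpieceIcc hv) huv) (hle v (h01B v hv))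
      · have huveq : u = v := le_antisymm huv (by rw [hua]; exact hv.2)
        exact le_of_eq (congrArg T huveq)
      · have huveq : u = v := le_antisymm huv (by rw [hua]; exact hv.2)
        exact le_of_eq (congrArg T huveq)
      · have huveq : u = v := le_antisymm huv (by rw [hua]; exact hv.2)
        exact le_of_eq (congrArg T huveq)
    · right
      have hTbanti : Antitone (Tb s) := (hTbp s hsS).1.2 hos
      have hτ1a : AntitoneOn τ1 (Set.Icc (a s) (a (runNext o m s))) :=
        ((hblockmono s hsS).2 hos).1
      have hτ2a : AntitoneOn τ2 (Set.Icc (a s) (a (runNext o m s))) :=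
        ((hblockmono s hsS).2 hos).2
      intro u hu v hv huv
      rcases hdesc u hu with ⟨hTu, huB, _⟩ | ⟨hTu, hua, hus0⟩ | ⟨hTu, hua⟩ <;>
        rcases hdesc v hv with ⟨hTv, hvB, hvno⟩ | ⟨hTv, hva, hvs0⟩ | ⟨hTv, hva⟩ <;>
        (try simp only [hos, Bool.false_eq_true, if_false] at hTu hTv)
      · rw [hTu, hTv]; exact hTbanti huv
      · have huveq : u = v := le_antisymm huv
          (by rw [hva]; exact le_trans (haLe s j hsj (by omega)) hu.1)
        exact le_of_eq (congrArg T huveq.symm)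
      · rw [hTu, hTv]
        exact le_trans (hτ1a huB (hpieceIcc hv) huv) (hbnd u huB).1
      · rw [hTu, hTv]
        exact le_trans (hbnd v hvB).2 (hτ2a (hpieceIcc hu) hvB huv)
      · exact le_of_eq (congrArg T (hua.trans hva.symm).symm)
      · rw [hTu, hTv]
        exact le_trans (hτ1a (hpieceIcc hu) (hpieceIcc hv) huv) (hle u (h01B u hu))
      · have huveq : u = v := le_antisymm huv (by rw [hua]; exact hv.2)
        exact le_of_eq (congrArg T huveq.symm)
      · have huveq : u = v := le_antisymm huv (by rw [hua]; exact hv.2)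
        exact le_of_eq (congrArg T huveq.symm)
      · have huveq : u = v := le_antisymm huv (by rw [hua]; exact hv.2)
        exact le_of_eq (congrArg T huveq.symm)
  · -- invariance
    intro A hA
    have hTmeasA : MeasurableSet (T ⁻¹' A) := hTmeas hA
    have hdisj : (S : Set ℕ).PairwiseDisjoint Bk := by
      intro s hs s' hs' hne
      refine Set.disjoint_left.2 ?_
      intro x hx hx'
      exact hne (huniq x s (Finset.mem_coe.1 hs) s' (Finset.mem_coe.1 hs') hx hx')
    have hres : (densMeasure f).restrict (Set.Ico (0:ℝ) 1) = densMeasure f := by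
      ext B hB
      rw [Measure.restrict_apply hB]
      refine le_antisymm (measure_mono Set.inter_subset_left) ?_
      calc densMeasure f B
          ≤ densMeasure f (B ∩ Set.Ico (0:ℝ) 1) + densMeasure f (B \ Set.Ico (0:ℝ) 1) :=
            measure_le_inter_add_diff _ _ _
        _ ≤ densMeasure f (B ∩ Set.Ico (0:ℝ) 1) + densMeasure f (Set.Ico (0:ℝ) 1)ᶜ :=
            add_le_add_right (measure_mono (fun z hz => hz.2)) _
        _ = densMeasure f (B ∩ Set.Ico (0:ℝ) 1) := by rw [hIcoC, add_zero]
    have hmuEq : densMeasure f (T ⁻¹' A) = ∑ s ∈ S, densMeasure f (T ⁻¹' A ∩ Bk s) := by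
      have h1 : densMeasure f (T ⁻¹' A) = densMeasure f (T ⁻¹' A ∩ Set.Ico 0 1) := by
        refine le_antisymm ?_ (measure_mono Set.inter_subset_left)
        calc densMeasure f (T ⁻¹' A)
            ≤ densMeasure f (T ⁻¹' A ∩ Set.Ico (0:ℝ) 1)
              + densMeasure f (T ⁻¹' A \ Set.Ico (0:ℝ) 1) := measure_le_inter_add_diff _ _ _
          _ ≤ densMeasure f (T ⁻¹' A ∩ Set.Ico (0:ℝ) 1) + densMeasure f (Set.Ico (0:ℝ) 1)ᶜ :=
              add_le_add_right (measure_mono (fun z hz => hz.2)) _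
          _ = densMeasure f (T ⁻¹' A ∩ Set.Ico (0:ℝ) 1) := by rw [hIcoC, add_zero]
      have h2 : T ⁻¹' A ∩ Set.Ico (0:ℝ) 1 = ⋃ s ∈ S, (T ⁻¹' A ∩ Bk s) := by
        rw [← hcover]
        ext z
        simp only [Set.mem_inter_iff, Set.mem_iUnion]
        tauto
      rw [h1, h2]
      exact measure_biUnion_finset
        (fun sx hsx sy hsy hne => ((hdisj hsx hsy hne).mono
          Set.inter_subset_right Set.inter_subset_right))
        (fun b hb => hTmeasA.inter measurableSet_Ico)
    have hterm : ∀ s ∈ S, densMeasure f (T ⁻¹' A ∩ Bk s) =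
        ∫⁻ x in Bk s,
          (ENNReal.ofReal (p x) * A.indicator (fun _ => (1:ℝ≥0∞)) (τ1 x)
            + ENNReal.ofReal (1 - p x) * A.indicator (fun _ => (1:ℝ≥0∞)) (τ2 x))
          ∂(densMeasure f) := by
      intro s hs
      have h1 : densMeasure f (T ⁻¹' A ∩ Bk s)
          = ((densMeasure f).restrict (Bk s)) (T ⁻¹' A) :=
        (Measure.restrict_apply hTmeasA).symm
      have hae : ∀ᵐ x ∂((densMeasure f).restrict (Bk s)), T x = Tb s x := by
        rw [ae_iff]
        have hsub : {x | ¬ T x = Tb s x} ∩ Bk s ⊆ {a s} := by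
          rintro x ⟨hxne, hxB⟩
          by_contra hxa
          have hvv := hval s hs x hxB
          rw [if_neg (by
            rintro ⟨h1x, _⟩
            exact hxa (by rw [h1x]; exact Set.mem_singleton _))] at hvv
          exact hxne hvv
        have hms : MeasurableSet {x | ¬ T x = Tb s x} :=
          (measurableSet_eq_fun hTmeas (hTbmeas s hs)).compl
        rw [Measure.restrict_apply hms]
        exact measure_mono_null hsub (hatomμ (a s))
      have h2 : ((densMeasure f).restrict (Bk s)) (T ⁻¹' A)
          = ((densMeasure f).restrict (Bk s)) (Tb s ⁻¹' A) := by
        refine measure_congr ?_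
        filter_upwards [hae] with x hx
        exact congrArg (fun z => z ∈ A) hx
      rw [h1, h2]
      exact (hTbp s hs).2.2 A hA
    rw [hmuEq, Finset.sum_congr rfl hterm]
    have hsum := lintegral_biUnion_finset (μ := densMeasure f) (s := S) (t := Bk) hdisj
      (fun b hb => measurableSet_Ico)
      (fun x => ENNReal.ofReal (p x) * A.indicator (fun _ => (1:ℝ≥0∞)) (τ1 x)
        + ENNReal.ofReal (1 - p x) * A.indicator (fun _ => (1:ℝ≥0∞)) (τ2 x))
    rw [← hsum, hcover]
    have hIcoInt : ∫⁻ x in Set.Ico (0:ℝ) 1,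
        (ENNReal.ofReal (p x) * A.indicator (fun _ => (1:ℝ≥0∞)) (τ1 x)
          + ENNReal.ofReal (1 - p x) * A.indicator (fun _ => (1:ℝ≥0∞)) (τ2 x))
        ∂(densMeasure f)
        = ∫⁻ x,
        (ENNReal.ofReal (p x) * A.indicator (fun _ => (1:ℝ≥0∞)) (τ1 x)
          + ENNReal.ofReal (1 - p x) * A.indicator (fun _ => (1:ℝ≥0∞)) (τ2 x))
        ∂(densMeasure f) := by
      rw [hres]
    rw [hIcoInt]
    exact (hinv A hA).symm
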